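/- arXiv:0803.3689 — 4 statements merged into one kernel-verified Lean document; each statement's English description precedes it below -/
import Mathlib

section
/- If P is a finitely generated graded projective Λ-module and Q a finitely generated graded projective Γ-module, then P ⊗_k^t Q is a graded projective module over the twisted tensor product Λ ⊗_k^t Γ. -/
open TensorProduct DirectSum

set_option linter.unusedSectionVars false
set_option maxHeartbeats 1000000
set_option synthInstance.maxHeartbeats 200000

noncomputable section Stmt4Aux

variable {k : Type} [Field k]

section gproj

variable {ι κ M N : Type} [DecidableEq ι] [DecidableEq κ]
  [AddCommGroup M] [Module k M] [AddCommGroup N] [Module k N]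
  (ℳ : ι → Submodule k M) (𝒩 : κ → Submodule k N)
  [DirectSum.Decomposition ℳ] [DirectSum.Decomposition 𝒩]

def gEquiv : (M ⊗[k] N) ≃ₗ[k] ⨁ i : ι × κ, (ℳ i.1 ⊗[k] 𝒩 i.2) :=
  (TensorProduct.congr (decomposeLinearEquiv ℳ) (decomposeLinearEquiv 𝒩)).trans
    (TensorProduct.directSum k k (fun i => ℳ i) (fun j => 𝒩 j))

lemma gEquiv_tmul {i j} (m : M) (n : N) (hm : m ∈ ℳ i) (hn : n ∈ 𝒩 j) :
    gEquiv ℳ 𝒩 (m ⊗ₜ n)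
      = lof k (ι × κ) (fun p : ι × κ => ℳ p.1 ⊗[k] 𝒩 p.2) (i, j) (⟨m, hm⟩ ⊗ₜ ⟨n, hn⟩) := by
  have hm' : decomposeLinearEquiv ℳ m = lof k ι (fun i => ℳ i) i ⟨m, hm⟩ := by
    simp [decomposeLinearEquiv_apply, decompose_of_mem ℳ hm, lof_eq_of]
  have hn' : decomposeLinearEquiv 𝒩 n = lof k κ (fun j => 𝒩 j) j ⟨n, hn⟩ := by
    simp [decomposeLinearEquiv_apply, decompose_of_mem 𝒩 hn, lof_eq_of]
  show (TensorProduct.directSum k k (fun i => ℳ i) (fun j => 𝒩 j))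
    ((TensorProduct.congr (decomposeLinearEquiv ℳ) (decomposeLinearEquiv 𝒩)) (m ⊗ₜ n)) = _
  rw [TensorProduct.congr_tmul, hm', hn', TensorProduct.directSum_lof_tmul_lof]

def gproj (c : ι → κ → k) : M ⊗[k] N →ₗ[k] M ⊗[k] N :=
  (gEquiv ℳ 𝒩).symm.toLinearMap
    ∘ₗ (DirectSum.toModule k (ι × κ) _ fun p =>
        c p.1 p.2 • lof k (ι × κ) (fun p : ι × κ => ℳ p.1 ⊗[k] 𝒩 p.2) p)
    ∘ₗ (gEquiv ℳ 𝒩).toLinearMap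

lemma gproj_tmul (c : ι → κ → k) {i j} (m : M) (n : N) (hm : m ∈ ℳ i) (hn : n ∈ 𝒩 j) :
    gproj ℳ 𝒩 c (m ⊗ₜ n) = c i j • (m ⊗ₜ[k] n) := by
  have h2 : (gEquiv ℳ 𝒩).symm (lof k (ι × κ) (fun p : ι × κ => ℳ p.1 ⊗[k] 𝒩 p.2) (i, j)
      (⟨m, hm⟩ ⊗ₜ ⟨n, hn⟩)) = m ⊗ₜ n := by
    rw [LinearEquiv.symm_apply_eq, gEquiv_tmul ℳ 𝒩 m n hm hn]
  show (gEquiv ℳ 𝒩).symm ((DirectSum.toModule k (ι × κ) _ fun p =>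
        c p.1 p.2 • lof k (ι × κ) (fun p : ι × κ => ℳ p.1 ⊗[k] 𝒩 p.2) p)
        ((gEquiv ℳ 𝒩) (m ⊗ₜ n))) = _
  rw [gEquiv_tmul ℳ 𝒩 m n hm hn, DirectSum.toModule_lof, LinearMap.smul_apply, map_smul, h2]

end gproj

section action

variable (R S M : Type) [CommSemiring R] [Semiring S] [Algebra R S]
  [AddCommMonoid M] [Module R M] [Module S M] [IsScalarTower R S M]

def actionHom : S ⊗[R] M →ₗ[S] M :=
  TensorProduct.AlgebraTensorModule.lift
    { toFun := fun s =>
        { toFun := fun m => s • m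
          map_add' := fun x y => smul_add s x y
          map_smul' := fun c x => (smul_comm c s x).symm }
      map_add' := fun s s' => LinearMap.ext fun m => add_smul s s' m
      map_smul' := fun c s => LinearMap.ext fun m => by
        simp only [LinearMap.coe_mk, AddHom.coe_mk, RingHom.id_apply, LinearMap.smul_apply,
          smul_assoc] }

@[simp] lemma actionHom_tmul (s : S) (m : M) : actionHom R S M (s ⊗ₜ m) = s • m := rfl

end action

section main

variable {k A B Λ Γ T P Q : Type} [Field k]
    [AddCommGroup A] [AddCommGroup B] [DecidableEq A] [DecidableEq B]
    [Ring Λ] [Algebra k Λ] [Ring Γ] [Algebra k Γ]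
    (𝒜 : A → Submodule k Λ) (ℬ : B → Submodule k Γ)
    [GradedAlgebra 𝒜] [GradedAlgebra ℬ]
    (t : A → B → kˣ)
    [Ring T] [Algebra k T] (e : (Λ ⊗[k] Γ) ≃ₗ[k] T)
    [AddCommGroup P] [Module k P] [Module Λ P] [IsScalarTower k Λ P]
    (𝓟 : A → Submodule k P) [DirectSum.Decomposition 𝓟]
    [AddCommGroup Q] [Module k Q] [Module Γ Q] [IsScalarTower k Γ Q]
    (𝓠 : B → Submodule k Q) [DirectSum.Decomposition 𝓠]
    [Module T (P ⊗[k] Q)] [IsScalarTower k T (P ⊗[k] Q)]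

/-- Projection of `Λ ⊗ P` onto its total-degree-`d` part. -/
def piD (d : A) : Λ ⊗[k] P →ₗ[k] Λ ⊗[k] P :=
  gproj 𝒜 𝓟 (fun a a' => if a + a' = d then (1 : k) else 0)

/-- The twisted braiding `P ⊗ Γ → Γ ⊗ P`. -/
def braid : P ⊗[k] Γ →ₗ[k] Γ ⊗[k] P :=
  (TensorProduct.comm k P Γ).toLinearMap ∘ₗ gproj 𝓟 ℬ (fun a b => ((t a b : k))⁻¹)

lemma braid_tmul {a b} (p : P) (γ : Γ) (hp : p ∈ 𝓟 a) (hγ : γ ∈ ℬ b) :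
    braid ℬ t 𝓟 (p ⊗ₜ γ) = ((t a b : k))⁻¹ • (γ ⊗ₜ p) := by
  show (TensorProduct.comm k P Γ) (gproj 𝓟 ℬ _ (p ⊗ₜ γ)) = _
  rw [gproj_tmul 𝓟 ℬ _ p γ hp hγ, map_smul, TensorProduct.comm_tmul]

/-- The twisted shuffle `(Λ ⊗ P) ⊗ (Γ ⊗ Q) → T ⊗ (P ⊗ Q)`. -/
def bigL : (Λ ⊗[k] P) ⊗[k] (Γ ⊗[k] Q) →ₗ[k] T ⊗[k] (P ⊗[k] Q) :=
  (TensorProduct.map e.toLinearMap LinearMap.id)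
  ∘ₗ (TensorProduct.assoc k Λ Γ (P ⊗[k] Q)).symm.toLinearMap
  ∘ₗ (TensorProduct.congr (LinearEquiv.refl k Λ) (TensorProduct.assoc k Γ P Q)).toLinearMap
  ∘ₗ (TensorProduct.map LinearMap.id (TensorProduct.map (braid ℬ t 𝓟) LinearMap.id))
  ∘ₗ (TensorProduct.congr (LinearEquiv.refl k Λ) (TensorProduct.assoc k P Γ Q).symm).toLinearMap
  ∘ₗ (TensorProduct.assoc k Λ P (Γ ⊗[k] Q)).toLinearMap

lemma bigL_tmul {a b} (l : Λ) (p : P) (γ : Γ) (q : Q) (hp : p ∈ 𝓟 a) (hγ : γ ∈ ℬ b) :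
    bigL ℬ t e 𝓟 ((l ⊗ₜ p) ⊗ₜ (γ ⊗ₜ q))
      = ((t a b : k))⁻¹ • (e (l ⊗ₜ γ) ⊗ₜ (p ⊗ₜ q)) := by
  simp only [bigL, LinearMap.comp_apply, LinearEquiv.coe_coe, TensorProduct.assoc_tmul,
    TensorProduct.congr_tmul, LinearEquiv.refl_apply, TensorProduct.assoc_symm_tmul,
    TensorProduct.map_tmul, LinearMap.id_apply, braid_tmul ℬ t 𝓟 p γ hp hγ,
    TensorProduct.smul_tmul, TensorProduct.tmul_smul, map_smul]

set_option linter.unusedSectionVars false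

/-- Graded-ization of a `Λ`-linear section `σ' : P → Λ ⊗ P`. -/
def grs (σ' : P →ₗ[Λ] Λ ⊗[k] P) : P →ₗ[k] Λ ⊗[k] P :=
  (DirectSum.toModule k A (Λ ⊗[k] P) fun a =>
      piD 𝒜 𝓟 a ∘ₗ (σ'.restrictScalars k) ∘ₗ (𝓟 a).subtype)
  ∘ₗ (decomposeLinearEquiv 𝓟).toLinearMap

lemma grs_homog (σ' : P →ₗ[Λ] Λ ⊗[k] P) {a} (p : P) (hp : p ∈ 𝓟 a) :
    grs 𝒜 𝓟 σ' p = piD 𝒜 𝓟 a (σ' p) := by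
  show (DirectSum.toModule k A (Λ ⊗[k] P) fun a =>
      piD 𝒜 𝓟 a ∘ₗ (σ'.restrictScalars k) ∘ₗ (𝓟 a).subtype) (decomposeLinearEquiv 𝓟 p) = _
  have : decomposeLinearEquiv 𝓟 p = lof k A (fun a => 𝓟 a) a ⟨p, hp⟩ := by
    simp [decomposeLinearEquiv_apply, decompose_of_mem 𝓟 hp, lof_eq_of]
  rw [this, DirectSum.toModule_lof]
  rfl

lemma piD_smul {c : A} (l : Λ) (hl : l ∈ 𝒜 c) (d : A) (x : Λ ⊗[k] P) :
    piD 𝒜 𝓟 (c + d) (l • x) = l • piD 𝒜 𝓟 d x := by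
  have key : ∀ (i : A) (m : Λ) (_ : m ∈ 𝒜 i) (j : A) (n : P) (_ : n ∈ 𝓟 j),
      piD 𝒜 𝓟 (c + d) (l • (m ⊗ₜ[k] n)) = l • piD 𝒜 𝓟 d (m ⊗ₜ[k] n) := by
    intro i m hm j n hn
    rw [TensorProduct.smul_tmul', smul_eq_mul]
    rw [piD, gproj_tmul 𝒜 𝓟 _ (l * m) n (SetLike.mul_mem_graded hl hm) hn]
    rw [piD, gproj_tmul 𝒜 𝓟 _ m n hm hn]
    by_cases h : i + j = d
    · have h' : (c + i) + j = c + d := by rw [add_assoc, h]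
      rw [if_pos h, if_pos h', one_smul, one_smul, TensorProduct.smul_tmul', smul_eq_mul]
    · have h' : ¬ ((c + i) + j = c + d) := by
        rw [add_assoc, add_right_inj]; exact h
      rw [if_neg h, if_neg h', zero_smul, zero_smul, smul_zero]
  induction x using TensorProduct.induction_on with
  | zero => simp
  | add x y hx hy => rw [smul_add, map_add, hx, hy, map_add, smul_add]
  | tmul l' p =>
    induction l' using DirectSum.Decomposition.inductionOn 𝒜 with
    | zero => simp
    | add x y hx hy =>
      rw [TensorProduct.add_tmul, smul_add, map_add, hx, hy, map_add, smul_add]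
    | homogeneous m =>
      induction p using DirectSum.Decomposition.inductionOn 𝓟 with
      | zero => simp
      | add u v hu hv =>
        rw [TensorProduct.tmul_add, smul_add, map_add, hu, hv, map_add, smul_add]
      | homogeneous n => exact key _ _ m.2 _ _ n.2

lemma muP_piD (h𝓟 : ∀ {a a'} (l : Λ) (p : P), l ∈ 𝒜 a → p ∈ 𝓟 a' → l • p ∈ 𝓟 (a + a'))
    (d : A) (x : Λ ⊗[k] P) :
    actionHom k Λ P (piD 𝒜 𝓟 d x) = (decompose 𝓟 (actionHom k Λ P x) d : P) := by
  have key : ∀ (i : A) (m : Λ) (_ : m ∈ 𝒜 i) (j : A) (n : P) (_ : n ∈ 𝓟 j),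
      actionHom k Λ P (piD 𝒜 𝓟 d (m ⊗ₜ[k] n))
        = (decompose 𝓟 (actionHom k Λ P (m ⊗ₜ[k] n)) d : P) := by
    intro i m hm j n hn
    rw [piD, gproj_tmul 𝒜 𝓟 _ _ _ hm hn, LinearMap.map_smul_of_tower, actionHom_tmul]
    by_cases h : i + j = d
    · rw [if_pos h, one_smul, decompose_of_mem_same 𝓟 (h ▸ h𝓟 m n hm hn)]
    · rw [if_neg h, zero_smul, decompose_of_mem_ne 𝓟 (h𝓟 m n hm hn) h]
  induction x using TensorProduct.induction_on with
  | zero => simp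
  | add x y hx hy => simp [map_add, decompose_add, DirectSum.add_apply, hx, hy]
  | tmul l p =>
    induction l using DirectSum.Decomposition.inductionOn 𝒜 with
    | zero => simp
    | add x y hx hy =>
      simp [TensorProduct.add_tmul, map_add, decompose_add, DirectSum.add_apply, hx, hy]
    | homogeneous m =>
      induction p using DirectSum.Decomposition.inductionOn 𝓟 with
      | zero => simp
      | add u v hu hv =>
        simp [TensorProduct.tmul_add, map_add, decompose_add, DirectSum.add_apply, hu, hv]
      | homogeneous n => exact key _ _ m.2 _ _ n.2

lemma muP_grs (h𝓟 : ∀ {a a'} (l : Λ) (p : P), l ∈ 𝒜 a → p ∈ 𝓟 a' → l • p ∈ 𝓟 (a + a'))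
    (σ' : P →ₗ[Λ] Λ ⊗[k] P) (hσ : ∀ p, actionHom k Λ P (σ' p) = p) (p : P) :
    actionHom k Λ P (grs 𝒜 𝓟 σ' p) = p := by
  induction p using DirectSum.Decomposition.inductionOn 𝓟 with
  | zero => simp
  | add u v hu hv => rw [map_add, map_add, hu, hv]
  | homogeneous m =>
    rw [grs_homog 𝒜 𝓟 σ' _ m.2, muP_piD 𝒜 𝓟 h𝓟, hσ, decompose_of_mem_same 𝓟 m.2]

lemma grs_smul (h𝓟 : ∀ {a a'} (l : Λ) (p : P), l ∈ 𝒜 a → p ∈ 𝓟 a' → l • p ∈ 𝓟 (a + a'))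
    (σ' : P →ₗ[Λ] Λ ⊗[k] P) {c} (l : Λ) (hl : l ∈ 𝒜 c) (p : P) :
    grs 𝒜 𝓟 σ' (l • p) = l • grs 𝒜 𝓟 σ' p := by
  induction p using DirectSum.Decomposition.inductionOn 𝓟 with
  | zero => rw [smul_zero, map_zero, smul_zero]
  | add u v hu hv => rw [smul_add, map_add, hu, hv, map_add, smul_add]
  | homogeneous m =>
    rw [grs_homog 𝒜 𝓟 σ' _ (h𝓟 l _ hl m.2), map_smul, piD_smul 𝒜 𝓟 l hl,
      grs_homog 𝒜 𝓟 σ' _ m.2]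

lemma muT_bigL
    (hact : ∀ (ap : A) (bg : B) (l : Λ) (g : Γ) (p : P) (q : Q), g ∈ ℬ bg → p ∈ 𝓟 ap →
      e (l ⊗ₜ g) • (p ⊗ₜ q : P ⊗[k] Q) = (t ap bg : k) • ((l • p) ⊗ₜ (g • q)))
    (u : Λ ⊗[k] P) (v : Γ ⊗[k] Q) :
    actionHom k T (P ⊗[k] Q) (bigL ℬ t e 𝓟 (u ⊗ₜ v))
      = (actionHom k Λ P u) ⊗ₜ (actionHom k Γ Q v) := by
  have key : ∀ (l : Λ) (q : Q) (a : A) (p : P) (_ : p ∈ 𝓟 a) (b : B) (γ : Γ) (_ : γ ∈ ℬ b),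
      actionHom k T (P ⊗[k] Q) (bigL ℬ t e 𝓟 ((l ⊗ₜ p) ⊗ₜ (γ ⊗ₜ q)))
        = (actionHom k Λ P (l ⊗ₜ p)) ⊗ₜ (actionHom k Γ Q (γ ⊗ₜ q)) := by
    intro l q a p hp b γ hγ
    rw [bigL_tmul ℬ t e 𝓟 _ _ _ _ hp hγ, LinearMap.map_smul_of_tower, actionHom_tmul,
      hact a b l γ p q hγ hp, smul_smul, inv_mul_cancel₀ (Units.ne_zero _), one_smul,
      actionHom_tmul, actionHom_tmul]
  induction u using TensorProduct.induction_on with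
  | zero => simp
  | add x y hx hy => rw [TensorProduct.add_tmul, map_add, map_add, hx, hy, map_add,
      TensorProduct.add_tmul]
  | tmul l p =>
    induction v using TensorProduct.induction_on with
    | zero => simp
    | add x y hx hy => rw [TensorProduct.tmul_add, map_add, map_add, hx, hy, map_add,
        TensorProduct.tmul_add]
    | tmul γ q =>
      induction p using DirectSum.Decomposition.inductionOn 𝓟 with
      | zero => simp
      | add u' v' hu hv => rw [TensorProduct.tmul_add, TensorProduct.add_tmul, map_add,
          map_add, hu, hv, ← TensorProduct.add_tmul, ← map_add, ← TensorProduct.tmul_add]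
      | homogeneous m =>
        induction γ using DirectSum.Decomposition.inductionOn ℬ with
        | zero => simp
        | add u' v' hu hv => rw [TensorProduct.add_tmul, TensorProduct.tmul_add, map_add,
            map_add, hu, hv, ← TensorProduct.tmul_add, ← map_add, ← TensorProduct.add_tmul]
        | homogeneous n => exact key l q _ _ m.2 _ _ n.2

lemma bigL_act
    (ht₁' : ∀ a a' b, ((t (a + a') b : k)) = (t a b : k) * (t a' b : k))
    (ht₂' : ∀ a b b', ((t a (b + b') : k)) = (t a b : k) * (t a b' : k))
    (hemul : ∀ {a b} (x x' : Λ) (y y' : Γ), x' ∈ 𝒜 a → y ∈ ℬ b →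
      e (x ⊗ₜ y) * e (x' ⊗ₜ y') = (t a b : k) • e ((x * x') ⊗ₜ (y * y')))
    {c : A} {d : B} (l : Λ) (g : Γ) (hl : l ∈ 𝒜 c) (hg : g ∈ ℬ d)
    (a : A) (x : Λ ⊗[k] P) (v : Γ ⊗[k] Q) :
    e (l ⊗ₜ g) • bigL ℬ t e 𝓟 ((piD 𝒜 𝓟 a x) ⊗ₜ v)
      = (t a d : k) • bigL ℬ t e 𝓟 ((l • piD 𝒜 𝓟 a x) ⊗ₜ (g • v)) := by
  have key : ∀ (c' : A) (l' : Λ) (_ : l' ∈ 𝒜 c') (a' : A) (p' : P) (_ : p' ∈ 𝓟 a')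
      (d' : B) (γ' : Γ) (_ : γ' ∈ ℬ d') (q' : Q),
      e (l ⊗ₜ g) • bigL ℬ t e 𝓟 ((piD 𝒜 𝓟 a (l' ⊗ₜ p')) ⊗ₜ (γ' ⊗ₜ q'))
        = (t a d : k) • bigL ℬ t e 𝓟
            ((l • piD 𝒜 𝓟 a (l' ⊗ₜ p')) ⊗ₜ (g • (γ' ⊗ₜ q'))) := by
    intro c' l' hl' a' p' hp' d' γ' hγ' q'
    rw [piD, gproj_tmul 𝒜 𝓟 _ _ _ hl' hp']
    by_cases h : c' + a' = a
    · rw [if_pos h, one_smul]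
      rw [bigL_tmul ℬ t e 𝓟 _ _ _ _ hp' hγ']
      rw [smul_comm (e (l ⊗ₜ[k] g)) ((t a' d' : k))⁻¹]
      rw [TensorProduct.smul_tmul', smul_eq_mul, hemul l l' g γ' hl' hg]
      rw [show l • (l' ⊗ₜ[k] p') = (l * l') ⊗ₜ[k] p' from
        by rw [TensorProduct.smul_tmul', smul_eq_mul]]
      rw [show g • (γ' ⊗ₜ[k] q') = (g * γ') ⊗ₜ[k] q' from
        by rw [TensorProduct.smul_tmul', smul_eq_mul]]
      rw [bigL_tmul ℬ t e 𝓟 _ _ _ _ hp' (SetLike.mul_mem_graded hg hγ')]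
      rw [TensorProduct.smul_tmul', smul_smul, smul_smul, ← TensorProduct.smul_tmul']
      congr 1
      have h1 : (t a d : k) = (t c' d : k) * (t a' d : k) := by rw [← h, ht₁']
      have h2 : ((t a' (d + d') : k)) = (t a' d : k) * (t a' d' : k) := ht₂' a' d d'
      have n1 : (t a' d' : k) ≠ 0 := Units.ne_zero _
      have n2 : (t a' d : k) ≠ 0 := Units.ne_zero _
      rw [h1, h2]
      field_simp
    · rw [if_neg h, zero_smul]
      simp
  induction x using TensorProduct.induction_on with
  | zero => simp
  | add x y hx hy =>
    simp only [map_add, TensorProduct.add_tmul, smul_add, hx, hy]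
  | tmul l' p' =>
    induction v using TensorProduct.induction_on with
    | zero => simp
    | add x y hx hy =>
      simp only [map_add, TensorProduct.tmul_add, smul_add, hx, hy]
    | tmul γ' q' =>
      induction l' using DirectSum.Decomposition.inductionOn 𝒜 with
      | zero => simp
      | add x y hx hy =>
        simp only [TensorProduct.add_tmul, map_add, smul_add, hx, hy]
      | homogeneous m =>
        induction p' using DirectSum.Decomposition.inductionOn 𝓟 with
        | zero => simp
        | add x y hx hy =>
          simp only [TensorProduct.tmul_add, TensorProduct.add_tmul, map_add, smul_add, hx, hy]
        | homogeneous n =>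
          induction γ' using DirectSum.Decomposition.inductionOn ℬ with
          | zero => simp
          | add x y hx hy =>
            simp only [TensorProduct.add_tmul, TensorProduct.tmul_add, map_add, smul_add, hx, hy]
          | homogeneous w => exact key _ _ m.2 _ _ n.2 _ _ w.2 q'

end main
end Stmt4Aux

/-- If `P` is a finitely generated graded projective `Λ`-module and `Q` a
finitely generated graded projective `Γ`-module, then the twisted tensor product `P ⊗ᵗ Q`
(i.e. `P ⊗[k] Q` with the `T = Λ ⊗ᵗ Γ`-action given on homogeneous elements by
`(λ ⊗ γ)·(p ⊗ q) = t⟨|p|,|γ|⟩ λp ⊗ γq`) is a (graded) projective `T`-module. -/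
theorem stmt4 {k A B Λ Γ T P Q : Type} [Field k]
    [AddCommGroup A] [AddCommGroup B] [DecidableEq A] [DecidableEq B]
    [Ring Λ] [Algebra k Λ] [Ring Γ] [Algebra k Γ]
    (𝒜 : A → Submodule k Λ) (ℬ : B → Submodule k Γ)
    [GradedAlgebra 𝒜] [GradedAlgebra ℬ]
    (t : A → B → kˣ)
    (ht₁ : ∀ a a' b, t (a + a') b = t a b * t a' b)
    (ht₂ : ∀ a b b', t a (b + b') = t a b * t a b')
    [Ring T] [Algebra k T] (e : (Λ ⊗[k] Γ) ≃ₗ[k] T)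
    (he1 : e (1 ⊗ₜ 1) = 1)
    (hemul : ∀ {a b} (x x' : Λ) (y y' : Γ), x' ∈ 𝒜 a → y ∈ ℬ b →
      e (x ⊗ₜ y) * e (x' ⊗ₜ y') = (t a b : k) • e ((x * x') ⊗ₜ (y * y')))
    -- P a finitely generated graded projective Λ-module
    [AddCommGroup P] [Module k P] [Module Λ P] [IsScalarTower k Λ P]
    (𝓟 : A → Submodule k P) [DirectSum.Decomposition 𝓟]
    (h𝓟 : ∀ {a a'} (l : Λ) (p : P), l ∈ 𝒜 a → p ∈ 𝓟 a' → l • p ∈ 𝓟 (a + a'))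
    [Module.Projective Λ P] [Module.Finite Λ P]
    -- Q a finitely generated graded projective Γ-module
    [AddCommGroup Q] [Module k Q] [Module Γ Q] [IsScalarTower k Γ Q]
    (𝓠 : B → Submodule k Q) [DirectSum.Decomposition 𝓠]
    (h𝓠 : ∀ {b b'} (g : Γ) (q : Q), g ∈ ℬ b → q ∈ 𝓠 b' → g • q ∈ 𝓠 (b + b'))
    [Module.Projective Γ Q] [Module.Finite Γ Q]
    -- the twisted T-module structure on P ⊗[k] Q
    [Module T (P ⊗[k] Q)] [IsScalarTower k T (P ⊗[k] Q)]
    (hact : ∀ (ap : A) (bg : B) (l : Λ) (g : Γ) (p : P) (q : Q), g ∈ ℬ bg → p ∈ 𝓟 ap →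
      e (l ⊗ₜ g) • (p ⊗ₜ q : P ⊗[k] Q) = (t ap bg : k) • ((l • p) ⊗ₜ (g • q))) :
    Module.Projective T (P ⊗[k] Q) := by
  classical
  obtain ⟨σ', hσ'⟩ := Module.projective_lifting_property (R := Λ) (actionHom k Λ P)
      (LinearMap.id) (fun p => ⟨(1 : Λ) ⊗ₜ p, by simp⟩)
  obtain ⟨τ', hτ'⟩ := Module.projective_lifting_property (R := Γ) (actionHom k Γ Q)
      (LinearMap.id) (fun q => ⟨(1 : Γ) ⊗ₜ q, by simp⟩)
  have hσ : ∀ p, actionHom k Λ P (σ' p) = p := fun p => by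
    simpa using DFunLike.congr_fun hσ' p
  have hτ : ∀ q, actionHom k Γ Q (τ' q) = q := fun q => by
    simpa using DFunLike.congr_fun hτ' q
  have ht₁' : ∀ a a' b, ((t (a + a') b : k)) = (t a b : k) * (t a' b : k) := fun a a' b => by
    rw [ht₁ a a' b, Units.val_mul]
  have ht₂' : ∀ a b b', ((t a (b + b') : k)) = (t a b : k) * (t a b' : k) := fun a b b' => by
    rw [ht₂ a b b', Units.val_mul]
  set s₀ : P ⊗[k] Q →ₗ[k] T ⊗[k] (P ⊗[k] Q) :=
    bigL ℬ t e 𝓟 ∘ₗ TensorProduct.map (grs 𝒜 𝓟 σ') (τ'.restrictScalars k) with hs₀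
  have hsec : ∀ x : P ⊗[k] Q, actionHom k T (P ⊗[k] Q) (s₀ x) = x := by
    intro x
    induction x using TensorProduct.induction_on with
    | zero => simp
    | add x y hx hy => rw [map_add, map_add, hx, hy]
    | tmul p q =>
      rw [hs₀, LinearMap.comp_apply, TensorProduct.map_tmul,
        muT_bigL ℬ t e 𝓟 hact _ _, muP_grs 𝒜 𝓟 h𝓟 σ' hσ p]
      rw [LinearMap.coe_restrictScalars, hτ q]
  have hcore : ∀ {c : A} {d : B} (l : Λ) (g : Γ), l ∈ 𝒜 c → g ∈ ℬ d →
      ∀ x : P ⊗[k] Q, s₀ (e (l ⊗ₜ g) • x) = e (l ⊗ₜ g) • s₀ x := by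
    intro c d l g hl hg x
    induction x using TensorProduct.induction_on with
    | zero => rw [smul_zero, map_zero, smul_zero]
    | add x y hx hy => rw [smul_add, map_add, hx, hy, map_add, smul_add]
    | tmul p q =>
      induction p using DirectSum.Decomposition.inductionOn 𝓟 with
      | zero => rw [TensorProduct.zero_tmul, smul_zero, map_zero, smul_zero]
      | add x y hx hy =>
        rw [TensorProduct.add_tmul, smul_add, map_add, hx, hy, map_add, smul_add]
      | homogeneous m =>
        rename_i a
        have e1 : s₀ ((↑m : P) ⊗ₜ[k] q)
            = bigL ℬ t e 𝓟 ((piD 𝒜 𝓟 a (σ' ↑m)) ⊗ₜ (τ' q)) := by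
          rw [hs₀, LinearMap.comp_apply, TensorProduct.map_tmul,
            LinearMap.coe_restrictScalars, grs_homog 𝒜 𝓟 σ' _ m.2]
        have e2 : s₀ ((l • (↑m : P)) ⊗ₜ[k] (g • q))
            = bigL ℬ t e 𝓟 ((l • piD 𝒜 𝓟 a (σ' ↑m)) ⊗ₜ (g • τ' q)) := by
          rw [hs₀, LinearMap.comp_apply, TensorProduct.map_tmul,
            LinearMap.coe_restrictScalars, grs_smul 𝒜 𝓟 h𝓟 σ' l hl,
            grs_homog 𝒜 𝓟 σ' _ m.2, LinearMap.map_smul τ' g q]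
        rw [hact _ d l g _ q hg m.2, LinearMap.map_smul_of_tower, e2, e1,
          bigL_act 𝒜 ℬ t e 𝓟 ht₁' ht₂' hemul l g hl hg a (σ' ↑m) (τ' q)]
  have hlin : ∀ (cT : T) (x : P ⊗[k] Q), s₀ (cT • x) = cT • s₀ x := by
    intro cT x
    obtain ⟨y, rfl⟩ := e.surjective cT
    induction y using TensorProduct.induction_on with
    | zero => simp
    | add y z hy hz => rw [map_add, add_smul, map_add, hy, hz, ← add_smul, ← map_add]
    | tmul l g =>
      induction l using DirectSum.Decomposition.inductionOn 𝒜 with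
      | zero => simp
      | add u v hu hv =>
        rw [TensorProduct.add_tmul, map_add, add_smul, map_add, hu, hv, ← add_smul, ← map_add,
          ← TensorProduct.add_tmul]
      | homogeneous m =>
        induction g using DirectSum.Decomposition.inductionOn ℬ with
        | zero => simp
        | add u v hu hv =>
          rw [TensorProduct.tmul_add, map_add, add_smul, map_add, hu, hv, ← add_smul, ← map_add,
            ← TensorProduct.tmul_add]
        | homogeneous n => exact hcore _ _ m.2 n.2 x
  let sT : P ⊗[k] Q →ₗ[T] T ⊗[k] (P ⊗[k] Q) :=
    { toFun := s₀, map_add' := map_add s₀, map_smul' := hlin }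
  haveI : Module.Free T (T ⊗[k] (P ⊗[k] Q)) :=
    Module.Free.of_basis (Algebra.TensorProduct.basis T (Module.Free.chooseBasis k (P ⊗[k] Q)))
  exact Module.Projective.of_split sT (actionHom k T (P ⊗[k] Q)) (LinearMap.ext fun x => hsec x)
end

section
/- For graded modules M, M' over Λ and N, N' over Γ, the natural map grHom_Λ(M, M') ⊗_k grHom_Γ(N, N') → grHom_{Λ⊗_k^t Γ}(M ⊗_k^t N, M' ⊗_k^t N'), sending φ ⊗ ψ to the map m ⊗ n ↦ φ(m) ⊗ ψ(n), is a k-linear isomorphism when M and N are finitely generated. -/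
open TensorProduct

/-- The `k`-submodule of degree-preserving `R`-linear maps between two `G`-graded
`R`-modules (viewed inside the space of `k`-linear maps). -/
def grHom {k : Type} [Field k] (R : Type) [Ring R] [Algebra k R]
    {G : Type} [AddCommGroup G]
    {M M' : Type} [AddCommGroup M] [Module k M] [Module R M]
    [AddCommGroup M'] [Module k M'] [Module R M'] [SMulCommClass R k M']
    (𝓜 : G → Submodule k M) (𝓜' : G → Submodule k M') :
    Submodule k (M →ₗ[k] M') where
  carrier := {f | (∀ (r : R) (m : M), f (r • m) = r • f m) ∧
    ∀ g : G, ∀ m ∈ 𝓜 g, f m ∈ 𝓜' g}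
  add_mem' := fun hf hg => ⟨fun r m => by simp [hf.1, hg.1, smul_add],
    fun a m hm => Submodule.add_mem _ (hf.2 a m hm) (hg.2 a m hm)⟩
  zero_mem' := ⟨fun r m => by simp, fun a m hm => Submodule.zero_mem _⟩
  smul_mem' := fun c f hf => ⟨fun r m => by simp [hf.1, smul_comm],
    fun a m hm => Submodule.smul_mem _ _ (hf.2 a m hm)⟩

/-- The grading on `M ⊗[k] N`: the `(a,b)`-component is spanned by the `m ⊗ n` with
`m` of degree `a` and `n` of degree `b`. -/
def tensorGrading {k : Type} [Field k] {A B M N : Type}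
    [AddCommGroup M] [Module k M] [AddCommGroup N] [Module k N]
    (ℳ : A → Submodule k M) (𝒩 : B → Submodule k N) (p : A × B) :
    Submodule k (M ⊗[k] N) :=
  Submodule.span k {z : M ⊗[k] N | ∃ m n, m ∈ ℳ p.1 ∧ n ∈ 𝒩 p.2 ∧ z = m ⊗ₜ n}

section LinAlg
variable {k : Type} [Field k] {Y Z : Type} [AddCommGroup Y] [Module k Y]
  [AddCommGroup Z] [Module k Z]

/-- `eps ξ : Y ⊗ Z → Z`, `y ⊗ z ↦ ξ y • z`. -/
noncomputable def eps (ξ : Y →ₗ[k] k) : Y ⊗[k] Z →ₗ[k] Z :=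
  (TensorProduct.lid k Z).toLinearMap ∘ₗ LinearMap.rTensor Z ξ

@[simp] lemma eps_tmul (ξ : Y →ₗ[k] k) (y : Y) (z : Z) : eps ξ (y ⊗ₜ z) = ξ y • z := rfl

lemma eps_lTensor (ξ : Y →ₗ[k] k) (f : Z →ₗ[k] Z) (u : Y ⊗[k] Z) :
    eps ξ (LinearMap.lTensor Y f u) = f (eps ξ u) := by
  induction u using TensorProduct.induction_on with
  | zero => simp
  | tmul y z => simp [map_smul]
  | add u v hu hv => simp [hu, hv]

lemma exists_coords (W : Submodule k Y) [FiniteDimensional k W] :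
    ∃ (p : ℕ) (w : Fin p → Y) (ξ : Fin p → (Y →ₗ[k] k)),
      LinearIndependent k w ∧ (∀ l, w l ∈ W) ∧ (∀ y ∈ W, ∑ l, ξ l y • w l = y) := by
  obtain ⟨q, hq⟩ := Submodule.exists_isCompl W
  set b := Module.finBasis k W with hb
  refine ⟨_, fun l => (b l : Y), fun l => (b.coord l) ∘ₗ (W.linearProjOfIsCompl q hq),
    b.linearIndependent.map' W.subtype (Submodule.ker_subtype W), fun l => (b l).2, ?_⟩
  intro y hy
  have h1 : W.linearProjOfIsCompl q hq y = ⟨y, hy⟩ :=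
    Submodule.linearProjOfIsCompl_apply_left hq ⟨y, hy⟩
  simp only [LinearMap.comp_apply, h1]
  calc (∑ l, b.coord l ⟨y, hy⟩ • (b l : Y))
      = ((∑ l, b.repr ⟨y, hy⟩ l • b l : W) : Y) := by
        push_cast [Submodule.coe_sum]; rfl
    _ = y := by rw [b.sum_repr ⟨y, hy⟩]

lemma mem_range_rTensor_expand {p : ℕ} (W : Submodule k Y) (w : Fin p → Y)
    (ξ : Fin p → (Y →ₗ[k] k)) (hw : ∀ y ∈ W, ∑ l, ξ l y • w l = y) :
    ∀ u ∈ LinearMap.range (LinearMap.rTensor Z W.subtype),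
      u = ∑ l, (w l) ⊗ₜ[k] (eps (ξ l) u) := by
  rintro _ ⟨v, rfl⟩
  induction v using TensorProduct.induction_on with
  | zero => simp
  | tmul y z =>
      simp only [LinearMap.rTensor_tmul, eps_tmul, Submodule.coe_subtype]
      calc (y : Y) ⊗ₜ[k] z = (∑ l, ξ l y • w l) ⊗ₜ[k] z := by rw [hw y.1 y.2]
        _ = ∑ l, (ξ l (y : Y) • w l) ⊗ₜ[k] z := by rw [sum_tmul]
        _ = ∑ l, w l ⊗ₜ[k] (ξ l (y : Y) • z) := by
              refine Finset.sum_congr rfl fun l _ => ?_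
              rw [smul_tmul]
  | add u v hu hv =>
      simp only [map_add, tmul_add, Finset.sum_add_distrib]
      rw [← hu, ← hv]

lemma exists_rep (u : Y ⊗[k] Z) :
    ∃ (p : ℕ) (y : Fin p → Y) (z : Fin p → Z),
      LinearIndependent k y ∧ u = ∑ l, y l ⊗ₜ[k] z l := by
  obtain ⟨S, rfl⟩ := TensorProduct.exists_finset u
  have hfin : (Prod.fst '' (S : Set (Y × Z))).Finite := S.finite_toSet.image _
  have : FiniteDimensional k (Submodule.span k (Prod.fst '' (S : Set (Y × Z)))) :=
    FiniteDimensional.span_of_finite k hfin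
  set W := Submodule.span k (Prod.fst '' (S : Set (Y × Z))) with hW
  obtain ⟨p, w, ξ, hli, hwW, hsum⟩ := exists_coords W
  refine ⟨p, w, fun l => eps (ξ l) (∑ i ∈ S, i.1 ⊗ₜ i.2), hli, ?_⟩
  apply mem_range_rTensor_expand W w ξ hsum
  apply Submodule.sum_mem
  intro i hi
  have h1 : i.1 ∈ W := Submodule.subset_span ⟨i, hi, rfl⟩
  exact ⟨(⟨i.1, h1⟩ : W) ⊗ₜ[k] i.2, rfl⟩

lemma exists_rep_right (u : Y ⊗[k] Z) :
    ∃ (p : ℕ) (y : Fin p → Y) (z : Fin p → Z),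
      LinearIndependent k z ∧ u = ∑ l, y l ⊗ₜ[k] z l := by
  obtain ⟨p, z, y, hli, hrep⟩ := exists_rep ((TensorProduct.comm k Y Z) u)
  refine ⟨p, y, z, hli, ?_⟩
  have h2 := congrArg (TensorProduct.comm k Y Z).symm hrep
  rw [LinearEquiv.symm_apply_apply, map_sum] at h2
  simpa [TensorProduct.comm_symm_tmul] using h2

lemma sum_tmul_eq_zero {p : ℕ} {y : Fin p → Y} (hy : LinearIndependent k y) (z : Fin p → Z)
    (h : ∑ l, y l ⊗ₜ[k] z l = 0) : ∀ l, z l = 0 := by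
  intro l₀
  have : FiniteDimensional k (Submodule.span k (Set.range y)) :=
    FiniteDimensional.span_of_finite k (Set.finite_range y)
  obtain ⟨q, hq⟩ := Submodule.exists_isCompl (Submodule.span k (Set.range y))
  set b := Module.Basis.span hy
  set ξ : Y →ₗ[k] k := (b.coord l₀) ∘ₗ
    ((Submodule.span k (Set.range y)).linearProjOfIsCompl q hq) with hξ
  have hξy : ∀ j, ξ (y j) = if l₀ = j then 1 else 0 := by
    intro j
    have hmem : y j ∈ Submodule.span k (Set.range y) :=
      Submodule.subset_span (Set.mem_range_self j)
    have h1 : (Submodule.span k (Set.range y)).linearProjOfIsCompl q hq (y j) = b j := by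
      have := Submodule.linearProjOfIsCompl_apply_left hq ⟨y j, hmem⟩
      erw [this]; ext; simp [b, Module.Basis.span_apply]
    simp only [hξ, LinearMap.comp_apply, h1, Module.Basis.coord_apply, Module.Basis.repr_self,
      Finsupp.single_apply, eq_comm]
  have h2 : eps ξ (∑ l, y l ⊗ₜ[k] z l) = (0 : Z) := by rw [h, map_zero]
  rw [map_sum] at h2
  simp only [eps_tmul, hξy, ite_smul, one_smul, zero_smul] at h2
  rwa [Finset.sum_ite_eq, if_pos (Finset.mem_univ l₀)] at h2

lemma comm_rTensor (φ : Y →ₗ[k] Y) (u : Y ⊗[k] Z) :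
    (TensorProduct.comm k Y Z) (LinearMap.rTensor Z φ u) =
      LinearMap.lTensor Z φ ((TensorProduct.comm k Y Z) u) := by
  induction u using TensorProduct.induction_on with
  | zero => simp
  | tmul y z => simp
  | add u v hu hv => simp [hu, hv]

end LinAlg

section Star
variable {k : Type} [Field k] {Y Z : Type} [AddCommGroup Y] [Module k Y]
  [AddCommGroup Z] [Module k Z]

/-- The workhorse: a `ρ`-semilinear map from a finitely generated `R`-module into `Y ⊗ Z`
(with `R` acting through `ρ` on the `Z`-factor only) decomposes as a finite sum
`∑ wₗ ⊗ gₗ` with `gₗ` being `ρ`-equivariant maps into `Z`. -/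
lemma star {R X : Type} [Ring R] [AddCommGroup X] [Module k X] [Module R X]
    [Module.Finite R X]
    (ρ : R → Z →ₗ[k] Z) (h : X →ₗ[k] Y ⊗[k] Z)
    (hh : ∀ (r : R) (x : X), h (r • x) = LinearMap.lTensor Y (ρ r) (h x)) :
    ∃ (p : ℕ) (w : Fin p → Y) (g : Fin p → (X →ₗ[k] Z)),
      (∀ l (r : R) (x : X), g l (r • x) = ρ r (g l x)) ∧
      ∀ x, h x = ∑ l, w l ⊗ₜ[k] g l x := by
  obtain ⟨n, s, hs⟩ := Module.Finite.exists_fin (R := R) (M := X)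
  choose Sj hSj using fun j => TensorProduct.exists_finset (h (s j))
  have hfin : (⋃ j, Prod.fst '' ((Sj j : Set (Y × Z)))).Finite :=
    Set.finite_iUnion (fun j => (Sj j).finite_toSet.image _)
  have : FiniteDimensional k (Submodule.span k (⋃ j, Prod.fst '' ((Sj j : Set (Y × Z))))) :=
    FiniteDimensional.span_of_finite k hfin
  set W := Submodule.span k (⋃ j, Prod.fst '' ((Sj j : Set (Y × Z)))) with hW
  obtain ⟨p, w, ξ, hli, hwW, hsum⟩ := exists_coords W
  have hWZstable : ∀ (r : R), ∀ u ∈ LinearMap.range (LinearMap.rTensor Z W.subtype),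
      LinearMap.lTensor Y (ρ r) u ∈ LinearMap.range (LinearMap.rTensor Z W.subtype) := by
    rintro r _ ⟨v, rfl⟩
    refine ⟨LinearMap.lTensor W (ρ r) v, ?_⟩
    rw [← LinearMap.comp_apply, ← LinearMap.comp_apply,
      LinearMap.rTensor_comp_lTensor, LinearMap.lTensor_comp_rTensor]
  have hrange : ∀ x, h x ∈ LinearMap.range (LinearMap.rTensor Z W.subtype) := by
    let S : Submodule R X :=
      { carrier := {x | h x ∈ LinearMap.range (LinearMap.rTensor Z W.subtype)}
        add_mem' := fun {a b} ha hb => by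
          simp only [Set.mem_setOf_eq, map_add] at *
          exact Submodule.add_mem _ ha hb
        zero_mem' := by simp only [Set.mem_setOf_eq, map_zero]; exact Submodule.zero_mem _
        smul_mem' := fun r x hx => by
          simp only [Set.mem_setOf_eq] at *
          rw [hh]
          exact hWZstable r _ hx }
    intro x
    have hx : x ∈ Submodule.span R (Set.range s) := hs ▸ Submodule.mem_top
    have hle : Submodule.span R (Set.range s) ≤ S := by
      rw [Submodule.span_le]
      rintro _ ⟨j, rfl⟩
      show h (s j) ∈ LinearMap.range (LinearMap.rTensor Z W.subtype)
      rw [hSj j]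
      apply Submodule.sum_mem
      intro i hi
      have h1 : i.1 ∈ W := Submodule.subset_span (Set.mem_iUnion.2 ⟨j, ⟨i, hi, rfl⟩⟩)
      exact ⟨(⟨i.1, h1⟩ : W) ⊗ₜ[k] i.2, rfl⟩
    exact hle hx
  refine ⟨p, w, fun l => eps (ξ l) ∘ₗ h, ?_, ?_⟩
  · intro l r x
    simp only [LinearMap.comp_apply, hh, eps_lTensor]
  · intro x
    exact mem_range_rTensor_expand W w ξ hsum _ (hrange x)

lemma star' {R X : Type} [Ring R] [AddCommGroup X] [Module k X] [Module R X]
    [Module.Finite R X]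
    (ρ : R → Y →ₗ[k] Y) (h : X →ₗ[k] Y ⊗[k] Z)
    (hh : ∀ (r : R) (x : X), h (r • x) = LinearMap.rTensor Z (ρ r) (h x)) :
    ∃ (p : ℕ) (w : Fin p → Z) (g : Fin p → (X →ₗ[k] Y)),
      (∀ l (r : R) (x : X), g l (r • x) = ρ r (g l x)) ∧
      ∀ x, h x = ∑ l, (g l x) ⊗ₜ[k] w l := by
  obtain ⟨p, w, g, hge, hrep⟩ := star (Y := Z) (Z := Y) ρ
    ((TensorProduct.comm k Y Z).toLinearMap ∘ₗ h)
    (fun r x => by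
      simp only [LinearMap.comp_apply, LinearEquiv.coe_coe]
      rw [hh, comm_rTensor])
  refine ⟨p, w, g, hge, fun x => ?_⟩
  have h1 : (TensorProduct.comm k Y Z) (h x) = ∑ l, w l ⊗ₜ[k] g l x := hrep x
  have h2 := congrArg (TensorProduct.comm k Y Z).symm h1
  rw [LinearEquiv.symm_apply_apply, map_sum] at h2
  simpa [TensorProduct.comm_symm_tmul] using h2

end Star

section Pi0
variable {k : Type} [Field k] {A : Type} [DecidableEq A] [AddCommGroup A]
  {Λ : Type} [Ring Λ] [Algebra k Λ]
  {M M' : Type} [AddCommGroup M] [Module k M] [AddCommGroup M'] [Module k M']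
  [Module Λ M] [Module Λ M']
  (𝒜 : A → Submodule k Λ) (ℳ : A → Submodule k M) (ℳ' : A → Submodule k M')
  [DirectSum.Decomposition ℳ] [DirectSum.Decomposition ℳ']

/-- The degree-zero part of a linear map between graded modules. -/
noncomputable def pi0 (f : M →ₗ[k] M') : M →ₗ[k] M' :=
  (DirectSum.toModule k A M' (fun a =>
    ((ℳ' a).subtype ∘ₗ DFinsupp.lapply a ∘ₗ (DirectSum.decomposeLinearEquiv ℳ').toLinearMap) ∘ₗ
      (f ∘ₗ (ℳ a).subtype))) ∘ₗ (DirectSum.decomposeLinearEquiv ℳ).toLinearMap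

lemma pi0_apply_of_mem (f : M →ₗ[k] M') {a : A} {m : M} (hm : m ∈ ℳ a) :
    pi0 ℳ ℳ' f m = (DirectSum.decompose ℳ' (f m) a : M') := by
  unfold pi0
  simp only [LinearMap.comp_apply, LinearEquiv.coe_coe, DirectSum.decomposeLinearEquiv_apply,
    DirectSum.decompose_of_mem ℳ hm, ← DirectSum.lof_eq_of k, DirectSum.toModule_lof]
  rfl

lemma pi0_mem (f : M →ₗ[k] M') {a : A} {m : M} (hm : m ∈ ℳ a) :
    pi0 ℳ ℳ' f m ∈ ℳ' a := by
  rw [pi0_apply_of_mem ℳ ℳ' f hm]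
  exact SetLike.coe_mem _

lemma decompose_smul_shift
    (hℳ' : ∀ {a a'} (l : Λ) (m : M'), l ∈ 𝒜 a → m ∈ ℳ' a' → l • m ∈ ℳ' (a + a'))
    {c : A} {r : Λ} (hr : r ∈ 𝒜 c) (a : A) (x : M') :
    (DirectSum.decompose ℳ' (r • x) (c + a) : M') = r • (DirectSum.decompose ℳ' x a : M') := by
  induction x using DirectSum.Decomposition.inductionOn ℳ' with
  | zero => simp
  | @homogeneous d m =>
      by_cases hda : d = a
      · subst hda
        rw [DirectSum.decompose_of_mem_same ℳ' (hℳ' r m hr m.2),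
          DirectSum.decompose_of_mem_same ℳ' m.2]
      · rw [DirectSum.decompose_of_mem_ne ℳ' (hℳ' r m.1 hr m.2)
            (fun hc => hda (by exact add_left_cancel hc)),
          DirectSum.decompose_of_mem_ne ℳ' m.2 hda, smul_zero]
  | add x y hx hy =>
      rw [smul_add, DirectSum.decompose_add, DirectSum.decompose_add, DirectSum.add_apply,
        DirectSum.add_apply, Submodule.coe_add, Submodule.coe_add, hx, hy, smul_add]

lemma pi0_semilinear [DirectSum.Decomposition 𝒜]
    (hℳ : ∀ {a a'} (l : Λ) (m : M), l ∈ 𝒜 a → m ∈ ℳ a' → l • m ∈ ℳ (a + a'))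
    (hℳ' : ∀ {a a'} (l : Λ) (m : M'), l ∈ 𝒜 a → m ∈ ℳ' a' → l • m ∈ ℳ' (a + a'))
    (f : M →ₗ[k] M') (hf : ∀ (r : Λ) (m : M), f (r • m) = r • f m)
    (r : Λ) (m : M) : pi0 ℳ ℳ' f (r • m) = r • pi0 ℳ ℳ' f m := by
  induction r using DirectSum.Decomposition.inductionOn 𝒜 with
  | zero => simp
  | @homogeneous c r =>
      induction m using DirectSum.Decomposition.inductionOn ℳ with
      | zero => simp
      | @homogeneous a m =>
          rw [pi0_apply_of_mem ℳ ℳ' f (hℳ (r : Λ) (m : M) r.2 m.2),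
            pi0_apply_of_mem ℳ ℳ' f m.2, hf,
            decompose_smul_shift 𝒜 ℳ' hℳ' r.2 a (f m)]
      | add x y hx hy => rw [smul_add, map_add, map_add, hx, hy, smul_add]
  | add r r' hr hr' => rw [add_smul, map_add, hr, hr', add_smul]

/-- Projection onto the degree-`a` component. -/
noncomputable def projGr (a : A) : M' →ₗ[k] M' :=
  (ℳ' a).subtype ∘ₗ DFinsupp.lapply a ∘ₗ (DirectSum.decomposeLinearEquiv ℳ').toLinearMap

lemma projGr_apply (a : A) (x : M') :
    projGr ℳ' a x = (DirectSum.decompose ℳ' x a : M') := rfl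

lemma projGr_of_mem_same {a : A} {x : M'} (hx : x ∈ ℳ' a) : projGr ℳ' a x = x := by
  rw [projGr_apply, DirectSum.decompose_of_mem_same ℳ' hx]

lemma pi0_eq_proj (f : M →ₗ[k] M') {a : A} {m : M} (hm : m ∈ ℳ a) :
    pi0 ℳ ℳ' f m = projGr ℳ' a (f m) := by
  rw [pi0_apply_of_mem ℳ ℳ' f hm, projGr_apply]

end Pi0

section ExtHomog
variable {k : Type} [Field k] {A B : Type} [DecidableEq A] [DecidableEq B]
  {M N P : Type} [AddCommGroup M] [Module k M] [AddCommGroup N] [Module k N]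
  [AddCommGroup P] [Module k P]
  (ℳ : A → Submodule k M) (𝒩 : B → Submodule k N)
  [DirectSum.Decomposition ℳ] [DirectSum.Decomposition 𝒩]

lemma ext_homog {φ ψ : M ⊗[k] N →ₗ[k] P}
    (h : ∀ (a : A) (b : B) (m : M) (n : N), m ∈ ℳ a → n ∈ 𝒩 b →
      φ (m ⊗ₜ n) = ψ (m ⊗ₜ n)) : φ = ψ := by
  apply TensorProduct.ext'
  intro m n
  induction m using DirectSum.Decomposition.inductionOn ℳ with
  | zero => simp
  | @homogeneous a m =>
      induction n using DirectSum.Decomposition.inductionOn 𝒩 with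
      | zero => simp
      | @homogeneous b n => exact h a b m n m.2 n.2
      | add x y hx hy => rw [tmul_add, map_add, map_add, hx, hy]
  | add x y hx hy => rw [add_tmul, map_add, map_add, hx, hy]

end ExtHomog

section Helpers
variable {k : Type} [Field k]

/-- Scalar multiplication by a ring element as a `k`-linear map. -/
def smulMapk {R V : Type} [Ring R] [AddCommGroup V] [Module k V] [Module R V]
    [SMulCommClass R k V] (r : R) : V →ₗ[k] V where
  toFun := fun v => r • v
  map_add' := smul_add r
  map_smul' := fun c v => smul_comm r c v

@[simp] lemma smulMapk_apply {R V : Type} [Ring R] [AddCommGroup V] [Module k V] [Module R V]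
    [SMulCommClass R k V] (r : R) (v : V) : smulMapk (k := k) r v = r • v := rfl

lemma smulMapk_add {R V : Type} [Ring R] [AddCommGroup V] [Module k V] [Module R V]
    [SMulCommClass R k V] (r r' : R) :
    smulMapk (k := k) (V := V) (r + r') = smulMapk r + smulMapk r' := by
  ext v; simp [add_smul]

lemma smulMapk_zero {R V : Type} [Ring R] [AddCommGroup V] [Module k V] [Module R V]
    [SMulCommClass R k V] : smulMapk (k := k) (V := V) (0 : R) = 0 := by
  ext v; simp

/-- The `k`-subspace of `R`-equivariant maps inside `V →ₗ[k] W`. -/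
def eqvHom (R : Type) [Ring R] {V W : Type} [AddCommGroup V] [Module k V] [Module R V]
    [AddCommGroup W] [Module k W] [Module R W] [SMulCommClass R k W] :
    Submodule k (V →ₗ[k] W) where
  carrier := {f | ∀ (r : R) (v : V), f (r • v) = r • f v}
  add_mem' := fun hf hg => fun r v => by simp [hf r v, hg r v, smul_add]
  zero_mem' := fun r v => by simp
  smul_mem' := fun c f hf => fun r v => by simp [hf r v, smul_comm]

variable {Γ N N' M' : Type} [Ring Γ] [Algebra k Γ]
  [AddCommGroup N] [Module k N] [Module Γ N]
  [AddCommGroup N'] [Module k N'] [Module Γ N'] [SMulCommClass Γ k N']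
  [AddCommGroup M'] [Module k M']

/-- The natural map `M' ⊗ Hom_Γ(N,N') → Hom(N, M' ⊗ N')`. -/
noncomputable def psiMap :
    M' ⊗[k] (eqvHom (k := k) Γ (V := N) (W := N')) →ₗ[k] (N →ₗ[k] M' ⊗[k] N') :=
  TensorProduct.lift
    { toFun := fun m' =>
        { toFun := fun q => (TensorProduct.mk k M' N' m') ∘ₗ (q : N →ₗ[k] N')
          map_add' := fun q q' => by ext n; simp [tmul_add]
          map_smul' := fun c q => by ext n; simp }
      map_add' := fun m1 m2 => by ext q n; simp [add_tmul]
      map_smul' := fun c m' => by ext q n; simp [smul_tmul'] }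

@[simp] lemma psiMap_tmul (m' : M') (q : eqvHom (k := k) Γ (V := N) (W := N')) (n : N) :
    psiMap (m' ⊗ₜ q) n = m' ⊗ₜ[k] ((q : N →ₗ[k] N') n) := rfl

lemma psiMap_injective : Function.Injective
    (psiMap (k := k) (Γ := Γ) (N := N) (N' := N') (M' := M')) := by
  have h0 : ∀ u, psiMap (k := k) (Γ := Γ) (N := N) (N' := N') (M' := M') u = 0 → u = 0 := by
    intro u hu
    obtain ⟨p, y, z, hli, rfl⟩ := exists_rep u
    have hz : ∀ l, z l = 0 := by
      have h1 : ∀ n : N, ∑ l, y l ⊗ₜ[k] ((z l : N →ₗ[k] N') n) = 0 := by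
        intro n
        have := congrArg (fun φ => φ n) hu
        simpa [map_sum, LinearMap.sum_apply] using this
      intro l
      have h2 : ∀ n : N, ((z l : N →ₗ[k] N') n) = 0 := fun n =>
        sum_tmul_eq_zero hli (fun j => (z j : N →ₗ[k] N') n) (h1 n) l
      have h3 : (z l : N →ₗ[k] N') = 0 := LinearMap.ext h2
      exact Subtype.ext h3
    simp [hz]
  intro u v huv
  have : psiMap (k := k) (u - v) = 0 := by rw [map_sub, huv, sub_self]
  exact sub_eq_zero.mp (h0 _ this)

lemma mem_grHom {k : Type} [Field k] {R : Type} [Ring R] [Algebra k R]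
    {G : Type} [AddCommGroup G]
    {M M' : Type} [AddCommGroup M] [Module k M] [Module R M]
    [AddCommGroup M'] [Module k M'] [Module R M'] [SMulCommClass R k M']
    {𝓜 : G → Submodule k M} {𝓜' : G → Submodule k M'} {f : M →ₗ[k] M'} :
    f ∈ grHom R 𝓜 𝓜' ↔ ((∀ (r : R) (m : M), f (r • m) = r • f m) ∧
      ∀ g : G, ∀ m ∈ 𝓜 g, f m ∈ 𝓜' g) := Iff.rfl

lemma mem_eqvHom {k : Type} [Field k] {R : Type} [Ring R] {V W : Type}
    [AddCommGroup V] [Module k V] [Module R V]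
    [AddCommGroup W] [Module k W] [Module R W] [SMulCommClass R k W] {f : V →ₗ[k] W} :
    f ∈ eqvHom (k := k) R (V := V) (W := W) ↔ ∀ (r : R) (v : V), f (r • v) = r • f v := Iff.rfl

lemma psiMap_rTensor {k : Type} [Field k] {Γ N N' M' : Type} [Ring Γ] [Algebra k Γ]
    [AddCommGroup N] [Module k N] [Module Γ N]
    [AddCommGroup N'] [Module k N'] [Module Γ N'] [SMulCommClass Γ k N']
    [AddCommGroup M'] [Module k M'] (φ : M' →ₗ[k] M')
    (u : M' ⊗[k] (eqvHom (k := k) Γ (V := N) (W := N'))) (n : N) :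
    psiMap (LinearMap.rTensor _ φ u) n = LinearMap.rTensor N' φ (psiMap u n) := by
  induction u using TensorProduct.induction_on with
  | zero => simp
  | tmul m' q => simp
  | add u v hu hv => simp [hu, hv]

set_option maxHeartbeats 1000000
set_option synthInstance.maxHeartbeats 100000

/-- For graded modules `M, M'` over `Λ` and `N, N'` over `Γ`, with `M`, `N`
finitely generated, the natural map
`grHom_Λ(M,M') ⊗ grHom_Γ(N,N') → grHom_{Λ⊗ᵗΓ}(M ⊗ᵗ N, M' ⊗ᵗ N')`, `φ ⊗ ψ ↦ φ ⊗ ψ`,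
is a `k`-linear isomorphism. -/
theorem stmt5 {k A B Λ Γ T M M' N N' : Type} [Field k]
    [AddCommGroup A] [AddCommGroup B] [DecidableEq A] [DecidableEq B]
    [Ring Λ] [Algebra k Λ] [Ring Γ] [Algebra k Γ]
    (𝒜 : A → Submodule k Λ) (ℬ : B → Submodule k Γ)
    [GradedAlgebra 𝒜] [GradedAlgebra ℬ]
    (t : A → B → kˣ)
    (ht₁ : ∀ a a' b, t (a + a') b = t a b * t a' b)
    (ht₂ : ∀ a b b', t a (b + b') = t a b * t a b')
    [Ring T] [Algebra k T] (e : (Λ ⊗[k] Γ) ≃ₗ[k] T)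
    (he1 : e (1 ⊗ₜ 1) = 1)
    (hemul : ∀ {a b} (x x' : Λ) (y y' : Γ), x' ∈ 𝒜 a → y ∈ ℬ b →
      e (x ⊗ₜ y) * e (x' ⊗ₜ y') = (t a b : k) • e ((x * x') ⊗ₜ (y * y')))
    -- graded modules M, M' over Λ (M finitely generated)
    [AddCommGroup M] [Module k M] [Module Λ M] [IsScalarTower k Λ M] [SMulCommClass Λ k M]
    (ℳ : A → Submodule k M) [DirectSum.Decomposition ℳ]
    (hℳ : ∀ {a a'} (l : Λ) (m : M), l ∈ 𝒜 a → m ∈ ℳ a' → l • m ∈ ℳ (a + a'))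
    [Module.Finite Λ M]
    [AddCommGroup M'] [Module k M'] [Module Λ M'] [IsScalarTower k Λ M'] [SMulCommClass Λ k M']
    (ℳ' : A → Submodule k M') [DirectSum.Decomposition ℳ']
    (hℳ' : ∀ {a a'} (l : Λ) (m : M'), l ∈ 𝒜 a → m ∈ ℳ' a' → l • m ∈ ℳ' (a + a'))
    -- graded modules N, N' over Γ (N finitely generated)
    [AddCommGroup N] [Module k N] [Module Γ N] [IsScalarTower k Γ N] [SMulCommClass Γ k N]
    (𝒩 : B → Submodule k N) [DirectSum.Decomposition 𝒩]
    (h𝒩 : ∀ {b b'} (g : Γ) (n : N), g ∈ ℬ b → n ∈ 𝒩 b' → g • n ∈ 𝒩 (b + b'))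
    [Module.Finite Γ N]
    [AddCommGroup N'] [Module k N'] [Module Γ N'] [IsScalarTower k Γ N'] [SMulCommClass Γ k N']
    (𝒩' : B → Submodule k N') [DirectSum.Decomposition 𝒩']
    (h𝒩' : ∀ {b b'} (g : Γ) (n : N'), g ∈ ℬ b → n ∈ 𝒩' b' → g • n ∈ 𝒩' (b + b'))
    -- the twisted T-module structures on M ⊗[k] N and M' ⊗[k] N'
    [Module T (M ⊗[k] N)] [IsScalarTower k T (M ⊗[k] N)] [SMulCommClass T k (M ⊗[k] N)]
    (hact : ∀ (am : A) (bg : B) (l : Λ) (g : Γ) (m : M) (n : N), g ∈ ℬ bg → m ∈ ℳ am →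
      e (l ⊗ₜ g) • (m ⊗ₜ n : M ⊗[k] N) = (t am bg : k) • ((l • m) ⊗ₜ (g • n)))
    [Module T (M' ⊗[k] N')] [IsScalarTower k T (M' ⊗[k] N')] [SMulCommClass T k (M' ⊗[k] N')]
    (hact' : ∀ (am : A) (bg : B) (l : Λ) (g : Γ) (m : M') (n : N'), g ∈ ℬ bg → m ∈ ℳ' am →
      e (l ⊗ₜ g) • (m ⊗ₜ n : M' ⊗[k] N') = (t am bg : k) • ((l • m) ⊗ₜ (g • n))) :
    ∃ Φ : ((grHom Λ ℳ ℳ') ⊗[k] (grHom Γ 𝒩 𝒩')) ≃ₗ[k]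
        (grHom T (tensorGrading ℳ 𝒩) (tensorGrading ℳ' 𝒩')),
      ∀ (f : grHom Λ ℳ ℳ') (g : grHom Γ 𝒩 𝒩'),
        (Φ (f ⊗ₜ g) : (M ⊗[k] N) →ₗ[k] (M' ⊗[k] N')) =
          TensorProduct.map (f : M →ₗ[k] M') (g : N →ₗ[k] N') := by
  classical
  set Φ₀ : ((grHom Λ ℳ ℳ') ⊗[k] (grHom Γ 𝒩 𝒩')) →ₗ[k] ((M ⊗[k] N) →ₗ[k] (M' ⊗[k] N')) :=
    (TensorProduct.homTensorHomMap (RingHom.id k) M N M' N') ∘ₗ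
      (TensorProduct.map (grHom Λ ℳ ℳ').subtype (grHom Γ 𝒩 𝒩').subtype) with hPhidef
  have hPhitmul : ∀ (f : grHom Λ ℳ ℳ') (g : grHom Γ 𝒩 𝒩'),
      Φ₀ (f ⊗ₜ g) = TensorProduct.map (f : M →ₗ[k] M') (g : N →ₗ[k] N') := by
    intro f g
    simp [hPhidef, TensorProduct.map_tmul]
  -- normalization of the twisting on 0 degrees
  have ht0 : ∀ a : A, (t a 0 : k) = 1 := by
    intro a
    have h := ht₂ a 0 0
    rw [add_zero] at h
    have h1 : (1 : kˣ) = t a 0 := mul_left_cancel (a := t a 0) (by rw [mul_one, ← h])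
    rw [← h1, Units.val_one]
  -- action of e (1 ⊗ γ) on graded pieces of M' ⊗ N'
  have hEg : ∀ (a : A) (b b' : B) (γ : Γ), γ ∈ ℬ b → ∀ z ∈ tensorGrading ℳ' 𝒩' (a, b'),
      e ((1 : Λ) ⊗ₜ γ) • z = (t a b : k) • (LinearMap.lTensor M' (smulMapk γ) z) := by
    intro a b b' γ hγ z hz
    induction hz using Submodule.span_induction with
    | mem x hx =>
        obtain ⟨m', n', hm', hn', rfl⟩ := hx
        rw [hact' a b 1 γ m' n' hγ hm', LinearMap.lTensor_tmul, smulMapk_apply, one_smul]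
    | zero => simp
    | add x y hx hy h1 h2 => rw [smul_add, h1, h2, map_add, smul_add]
    | smul c x hx h1 => rw [smul_comm (e ((1:Λ) ⊗ₜ γ)) c x, h1, map_smul, smul_comm]
  -- action of e (l ⊗ 1) on graded pieces of M' ⊗ N'
  have hEl : ∀ (a : A) (b' : B) (l : Λ), ∀ z ∈ tensorGrading ℳ' 𝒩' (a, b'),
      e (l ⊗ₜ (1 : Γ)) • z = LinearMap.rTensor N' (smulMapk l) z := by
    intro a b' l z hz
    induction hz using Submodule.span_induction with
    | mem x hx =>
        obtain ⟨m', n', hm', hn', rfl⟩ := hx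
        rw [hact' a 0 l 1 m' n' (SetLike.one_mem_graded ℬ) hm', ht0, one_smul, one_smul,
          LinearMap.rTensor_tmul, smulMapk_apply]
    | zero => simp
    | add x y hx hy h1 h2 => rw [smul_add, h1, h2, map_add]
    | smul c x hx h1 => rw [smul_comm (e (l ⊗ₜ (1:Γ))) c x, h1, map_smul]
  -- untwisted semilinearity of degree-preserving T-linear maps
  have hsemiG : ∀ (F₀ : M ⊗[k] N →ₗ[k] M' ⊗[k] N'),
      (∀ (r : T) (z : M ⊗[k] N), F₀ (r • z) = r • F₀ z) →
      (∀ (p : A × B), ∀ z ∈ tensorGrading ℳ 𝒩 p, F₀ z ∈ tensorGrading ℳ' 𝒩' p) →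
      ∀ (m : M) (γ : Γ) (n : N),
        F₀ (m ⊗ₜ (γ • n)) = LinearMap.lTensor M' (smulMapk γ) (F₀ (m ⊗ₜ n)) := by
    intro F₀ hF1 hF2 m γ n
    induction m using DirectSum.Decomposition.inductionOn ℳ with
    | zero => simp
    | @homogeneous a m =>
        induction γ using DirectSum.Decomposition.inductionOn ℬ with
        | zero => simp [smulMapk_zero]
        | @homogeneous b γ =>
            induction n using DirectSum.Decomposition.inductionOn 𝒩 with
            | zero => simp
            | @homogeneous b' n =>
                have hc : (t a b : k) ≠ 0 := Units.ne_zero _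
                have h1 : e ((1:Λ) ⊗ₜ (γ:Γ)) • ((m:M) ⊗ₜ[k] (n:N)) =
                    (t a b : k) • ((m:M) ⊗ₜ ((γ:Γ) • (n:N))) := by
                  rw [hact a b 1 γ m n γ.2 m.2, one_smul]
                have h2 : (m:M) ⊗ₜ[k] ((γ:Γ) • (n:N)) =
                    (t a b : k)⁻¹ • (e ((1:Λ) ⊗ₜ (γ:Γ)) • ((m:M) ⊗ₜ[k] (n:N))) := by
                  rw [h1, smul_smul, inv_mul_cancel₀ hc, one_smul]
                have h3 : F₀ ((m:M) ⊗ₜ[k] (n:N)) ∈ tensorGrading ℳ' 𝒩' (a, b') :=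
                  hF2 (a, b') _ (Submodule.subset_span ⟨m, n, m.2, n.2, rfl⟩)
                rw [h2, map_smul, hF1, hEg a b b' γ γ.2 _ h3, smul_smul,
                  inv_mul_cancel₀ hc, one_smul]
            | add n1 n2 hn1 hn2 => simp only [smul_add, tmul_add, map_add, hn1, hn2]
        | add γ1 γ2 hγ1 hγ2 =>
            simp only [add_smul, tmul_add, map_add, hγ1, hγ2, smulMapk_add,
              LinearMap.lTensor_add, LinearMap.add_apply]
    | add m1 m2 hm1 hm2 => simp only [add_tmul, map_add, hm1, hm2]
  have hsemiL : ∀ (F₀ : M ⊗[k] N →ₗ[k] M' ⊗[k] N'),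
      (∀ (r : T) (z : M ⊗[k] N), F₀ (r • z) = r • F₀ z) →
      (∀ (p : A × B), ∀ z ∈ tensorGrading ℳ 𝒩 p, F₀ z ∈ tensorGrading ℳ' 𝒩' p) →
      ∀ (l : Λ) (m : M) (n : N),
        F₀ ((l • m) ⊗ₜ n) = LinearMap.rTensor N' (smulMapk l) (F₀ (m ⊗ₜ n)) := by
    intro F₀ hF1 hF2 l m n
    induction m using DirectSum.Decomposition.inductionOn ℳ with
    | zero => simp
    | @homogeneous a m =>
        induction n using DirectSum.Decomposition.inductionOn 𝒩 with
        | zero => simp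
        | @homogeneous b' n =>
            have h1 : e (l ⊗ₜ (1:Γ)) • ((m:M) ⊗ₜ[k] (n:N)) = (l • (m:M)) ⊗ₜ[k] (n:N) := by
              rw [hact a 0 l 1 m n (SetLike.one_mem_graded ℬ) m.2, ht0, one_smul, one_smul]
            have h3 : F₀ ((m:M) ⊗ₜ[k] (n:N)) ∈ tensorGrading ℳ' 𝒩' (a, b') :=
              hF2 (a, b') _ (Submodule.subset_span ⟨m, n, m.2, n.2, rfl⟩)
            rw [← h1, hF1, hEl a b' l _ h3]
        | add n1 n2 hn1 hn2 => simp only [tmul_add, map_add, hn1, hn2]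
    | add m1 m2 hm1 hm2 => simp only [smul_add, add_tmul, map_add, hm1, hm2]
  -- well-definedness
  have hmem : ∀ u, Φ₀ u ∈ grHom T (tensorGrading ℳ 𝒩) (tensorGrading ℳ' 𝒩') := by
    intro u
    induction u using TensorProduct.induction_on with
    | zero => rw [map_zero]; exact Submodule.zero_mem _
    | add x y hx hy => rw [map_add]; exact Submodule.add_mem _ hx hy
    | tmul f g =>
        rw [hPhitmul]
        refine mem_grHom.mpr ⟨?_, ?_⟩
        · have key : ∀ (x : Λ ⊗[k] Γ) (z : M ⊗[k] N),
              TensorProduct.map (f : M →ₗ[k] M') (g : N →ₗ[k] N') (e x • z) =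
                e x • TensorProduct.map (f : M →ₗ[k] M') (g : N →ₗ[k] N') z := by
            intro x
            induction x using TensorProduct.induction_on with
            | zero => intro z; simp
            | add x y hx hy =>
                intro z
                rw [map_add, add_smul, add_smul, map_add, hx z, hy z]
            | tmul l γ =>
                intro z
                induction z using TensorProduct.induction_on with
                | zero => simp
                | add z1 z2 h1 h2 => rw [smul_add, map_add, h1, h2, map_add, smul_add]
                | tmul m n =>
                    induction γ using DirectSum.Decomposition.inductionOn ℬ with
                    | zero => simp
                    | @homogeneous b γ =>
                        induction m using DirectSum.Decomposition.inductionOn ℳ with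
                        | zero => simp
                        | @homogeneous a m =>
                            rw [hact a b l γ m n γ.2 m.2, map_smul,
                              TensorProduct.map_tmul, TensorProduct.map_tmul,
                              hact' a b l γ _ _ γ.2 (f.2.2 a m m.2),
                              f.2.1 l (m : M), g.2.1 γ n]
                        | add m1 m2 h1 h2 =>
                            simp only [add_tmul, smul_add, map_add, h1, h2]
                    | add γ1 γ2 h1 h2 =>
                        simp only [tmul_add, map_add, add_smul, h1, h2]
          intro r z
          have h1 := key (e.symm r) z
          rwa [e.apply_symm_apply] at h1
        · intro p z hz
          induction hz using Submodule.span_induction with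
          | mem x hx =>
              obtain ⟨m, n, hm, hn, rfl⟩ := hx
              exact Submodule.subset_span
                ⟨(f : M →ₗ[k] M') m, (g : N →ₗ[k] N') n, f.2.2 p.1 m hm, g.2.2 p.2 n hn, by simp⟩
          | zero => rw [map_zero]; exact Submodule.zero_mem _
          | add x y _ _ h1 h2 => rw [map_add]; exact Submodule.add_mem _ h1 h2
          | smul c x _ h1 => rw [map_smul]; exact Submodule.smul_mem _ _ h1
  -- injectivity
  have hinj : ∀ u, Φ₀ u = 0 → u = 0 := by
    intro u hu
    obtain ⟨p, fs, gs, hli, hurep⟩ := exists_rep_right u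
    have h1 : ∀ (m : M) (n : N),
        ∑ l, ((fs l : M →ₗ[k] M') m) ⊗ₜ[k] ((gs l : N →ₗ[k] N') n) = 0 := by
      intro m n
      have h2 : Φ₀ u (m ⊗ₜ n) = 0 := by rw [hu]; rfl
      rw [hurep, map_sum, LinearMap.sum_apply] at h2
      have h3 : ∀ l, Φ₀ (fs l ⊗ₜ gs l) (m ⊗ₜ[k] n) =
          ((fs l : M →ₗ[k] M') m) ⊗ₜ[k] ((gs l : N →ₗ[k] N') n) := by
        intro l; rw [hPhitmul, TensorProduct.map_tmul]
      rwa [Finset.sum_congr rfl (fun l _ => h3 l)] at h2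
    have hfs0 : ∀ l, fs l = 0 := by
      intro l
      have hml : ∀ m : M, (fs l : M →ₗ[k] M') m = 0 := by
        intro m
        rw [← Module.forall_dual_apply_eq_zero_iff k]
        intro ξ
        have h4 : ∀ n : N, ∑ j, ξ ((fs j : M →ₗ[k] M') m) • ((gs j : N →ₗ[k] N') n) = 0 := by
          intro n
          have h5 := congrArg (eps (Z := N') ξ) (h1 m n)
          rw [map_sum, map_zero] at h5
          simpa [eps_tmul] using h5
        have h6 : ∑ j, ξ ((fs j : M →ₗ[k] M') m) • gs j = 0 := by
          apply Subtype.ext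
          rw [Submodule.coe_sum]
          apply LinearMap.ext
          intro n
          simpa [LinearMap.sum_apply] using h4 n
        exact Fintype.linearIndependent_iff.mp hli _ h6 l
      exact Subtype.ext (LinearMap.ext hml)
    rw [hurep]
    simp [hfs0]
  -- surjectivity
  have hsurj : ∀ F₀ ∈ grHom T (tensorGrading ℳ 𝒩) (tensorGrading ℳ' 𝒩'),
      ∃ u, Φ₀ u = F₀ := by
    intro F₀ hF
    obtain ⟨hF1, hF2⟩ := mem_grHom.mp hF
    set G := TensorProduct.curry F₀ with hGdef
    have hGmem : ∀ m : M, G m ∈ LinearMap.range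
        (psiMap (k := k) (Γ := Γ) (N := N) (N' := N') (M' := M')) := by
      intro m
      obtain ⟨p, w, g, hgeqv, hg⟩ := star (R := Γ) (X := N) (Y := M') (Z := N')
        (fun γ => smulMapk γ) (G m)
        (fun γ n => by
          simp only [hGdef, TensorProduct.curry_apply]
          exact hsemiG F₀ hF1 hF2 m γ n)
      refine ⟨∑ l, w l ⊗ₜ (⟨g l, hgeqv l⟩ : eqvHom (k := k) Γ (V := N) (W := N')), ?_⟩
      apply LinearMap.ext; intro n
      rw [map_sum, LinearMap.sum_apply]
      simp only [psiMap_tmul]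
      exact (hg n).symm
    set Ghat : M →ₗ[k] M' ⊗[k] (eqvHom (k := k) Γ (V := N) (W := N')) :=
      (LinearEquiv.ofInjective psiMap psiMap_injective).symm.toLinearMap ∘ₗ
        (G.codRestrict (LinearMap.range psiMap) hGmem) with hGhatdef
    have hPsiGhat : ∀ m, psiMap (Ghat m) = G m := by
      intro m
      have h1 : (LinearEquiv.ofInjective psiMap psiMap_injective) (Ghat m) =
          (G.codRestrict (LinearMap.range psiMap) hGmem) m :=
        LinearEquiv.apply_symm_apply _ _
      have h2 := congrArg Subtype.val h1
      rwa [LinearEquiv.ofInjective_apply] at h2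
    have hGhatsemi : ∀ (l : Λ) (m : M),
        Ghat (l • m) = LinearMap.rTensor _ (smulMapk l) (Ghat m) := by
      intro l m
      apply psiMap_injective
      apply LinearMap.ext; intro n
      rw [hPsiGhat, psiMap_rTensor, hPsiGhat]
      simp only [hGdef, TensorProduct.curry_apply]
      exact hsemiL F₀ hF1 hF2 l m n
    obtain ⟨p2, q, f, hfeqv, hGhat_rep⟩ := star' (R := Λ) (Y := M')
      (fun l => smulMapk l) Ghat (fun l m => hGhatsemi l m)
    have hkey : ∀ (m : M) (n : N),
        F₀ (m ⊗ₜ n) = ∑ l, (f l m) ⊗ₜ[k] ((q l : N →ₗ[k] N') n) := by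
      intro m n
      have h1 : F₀ (m ⊗ₜ n) = psiMap (Ghat m) n := by
        rw [hPsiGhat]; simp [hGdef]
      rw [h1, hGhat_rep, map_sum, LinearMap.sum_apply]
      simp only [psiMap_tmul]
    have hfmem : ∀ l, pi0 ℳ ℳ' (f l) ∈ grHom Λ ℳ ℳ' :=
      fun l => mem_grHom.mpr ⟨pi0_semilinear 𝒜 ℳ ℳ' hℳ hℳ' (f l)
        (fun r m => by rw [hfeqv l r m, smulMapk_apply]),
        fun a m hm => pi0_mem ℳ ℳ' (f l) hm⟩
    have hqmem : ∀ l, pi0 𝒩 𝒩' ((q l : N →ₗ[k] N')) ∈ grHom Γ 𝒩 𝒩' :=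
      fun l => mem_grHom.mpr ⟨pi0_semilinear ℬ 𝒩 𝒩' h𝒩 h𝒩' ((q l : N →ₗ[k] N'))
        (fun r n => (q l).2 r n),
        fun b n hn => pi0_mem 𝒩 𝒩' _ hn⟩
    refine ⟨∑ l, (⟨pi0 ℳ ℳ' (f l), hfmem l⟩ : grHom Λ ℳ ℳ') ⊗ₜ[k]
      (⟨pi0 𝒩 𝒩' ((q l : N →ₗ[k] N')), hqmem l⟩ : grHom Γ 𝒩 𝒩'), ?_⟩
    rw [map_sum]
    rw [Finset.sum_congr rfl (fun l _ => hPhitmul _ _)]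
    apply ext_homog ℳ 𝒩
    intro a b m n hm hn
    rw [LinearMap.sum_apply]
    have hL : ∀ l, TensorProduct.map (pi0 ℳ ℳ' (f l)) (pi0 𝒩 𝒩' ((q l : N →ₗ[k] N')))
        (m ⊗ₜ[k] n) = TensorProduct.map (projGr ℳ' a) (projGr 𝒩' b)
          ((f l m) ⊗ₜ[k] ((q l : N →ₗ[k] N') n)) := by
      intro l
      rw [TensorProduct.map_tmul, TensorProduct.map_tmul,
        pi0_eq_proj ℳ ℳ' (f l) hm, pi0_eq_proj 𝒩 𝒩' _ hn]
    rw [Finset.sum_congr rfl (fun l _ => hL l), ← map_sum, ← hkey m n]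
    have hmemF : F₀ (m ⊗ₜ[k] n) ∈ tensorGrading ℳ' 𝒩' (a, b) :=
      hF2 (a, b) _ (Submodule.subset_span ⟨m, n, hm, hn, rfl⟩)
    clear hL hkey
    revert hmemF
    generalize F₀ (m ⊗ₜ[k] n) = z
    intro hmemF
    induction hmemF using Submodule.span_induction with
    | mem x hx =>
        obtain ⟨m', n', hm', hn', rfl⟩ := hx
        rw [TensorProduct.map_tmul, projGr_of_mem_same ℳ' hm', projGr_of_mem_same 𝒩' hn']
    | zero => rw [map_zero]
    | add x y _ _ h1 h2 => rw [map_add, h1, h2]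
    | smul c x _ h1 => rw [map_smul, h1]
  -- assembly
  set Φ₁ : ((grHom Λ ℳ ℳ') ⊗[k] (grHom Γ 𝒩 𝒩')) →ₗ[k]
      (grHom T (tensorGrading ℳ 𝒩) (tensorGrading ℳ' 𝒩')) :=
    Φ₀.codRestrict _ hmem with hPhi1def
  have hbij : Function.Bijective Φ₁ := by
    constructor
    · intro u v huv
      have h1 : Φ₀ u = Φ₀ v := congrArg Subtype.val huv
      exact sub_eq_zero.mp (hinj _ (by rw [map_sub, h1, sub_self]))
    · intro F
      obtain ⟨u, hu⟩ := hsurj F.1 F.2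
      exact ⟨u, Subtype.ext (by simpa [hPhi1def] using hu)⟩
  refine ⟨LinearEquiv.ofBijective Φ₁ hbij, ?_⟩
  intro f g
  have h1 : (LinearEquiv.ofBijective Φ₁ hbij) (f ⊗ₜ g) = Φ₁ (f ⊗ₜ g) := rfl
  rw [h1]
  have h2 : (Φ₁ (f ⊗ₜ g) : (M ⊗[k] N) →ₗ[k] (M' ⊗[k] N')) = Φ₀ (f ⊗ₜ g) := rfl
  rw [h2, hPhitmul]
end Helpers
end

section
/- Let X be a graded Λ^e-module and Y a graded Γ^e-module, where Λ^e = Λ ⊗_k Λ^op and Γ^e = Γ ⊗_k Γ^op. Then the rule (λ ⊗ γ)(x ⊗ y)(λ' ⊗ γ') = t⟨|x|,|γ|⟩ t⟨|λ'|,|y|⟩ t⟨|λ'|,|γ|⟩ (λxλ') ⊗ (γyγ') defines a graded bimodule structure over Λ ⊗_k^t Γ, i.e. a graded (Λ ⊗_k^t Γ)^e-module structure on X ⊗_k Y. -/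
open TensorProduct MulOpposite

set_option linter.unusedSectionVars false
set_option maxHeartbeats 1000000
set_option maxRecDepth 10000

section Stmt9Aux

variable {k A B Λ Γ X Y : Type} [Field k]
  [AddCommGroup A] [AddCommGroup B] [DecidableEq A] [DecidableEq B]
  [Ring Λ] [Algebra k Λ] [Ring Γ] [Algebra k Γ]
  [AddCommGroup X] [Module k X] [Module Λ X] [Module Λᵐᵒᵖ X]
  [IsScalarTower k Λ X] [IsScalarTower k Λᵐᵒᵖ X]
  [AddCommGroup Y] [Module k Y] [Module Γ Y] [Module Γᵐᵒᵖ Y]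
  [IsScalarTower k Γ Y] [IsScalarTower k Γᵐᵒᵖ Y]

/-- Scalar action of an algebra `R` on a module `M`, as a `k`-bilinear map. -/
def lsmulk (k R M : Type) [CommSemiring k] [Semiring R] [Algebra k R]
    [AddCommMonoid M] [Module k M] [Module R M] [IsScalarTower k R M] :
    R →ₗ[k] M →ₗ[k] M where
  toFun r :=
    { toFun := fun m => r • m
      map_add' := fun m m' => smul_add r m m'
      map_smul' := fun c m => by
        simp only [RingHom.id_apply]
        rw [← algebraMap_smul R c m, ← mul_smul, ← Algebra.commutes, mul_smul,
          algebraMap_smul] }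
  map_add' r r' := by ext m; simp [add_smul]
  map_smul' c r := by ext m; simp [smul_assoc]

@[simp] lemma lsmulk_apply (k R M : Type) [CommSemiring k] [Semiring R] [Algebra k R]
    [AddCommMonoid M] [Module k M] [Module R M] [IsScalarTower k R M] (r : R) (m : M) :
    lsmulk k R M r m = r • m := rfl

/-- Rescaling each homogeneous component of a graded module by a scalar. -/
noncomputable def twist (𝒳 : A → Submodule k X) [DirectSum.Decomposition 𝒳] (c : A → k) :
    X →ₗ[k] X :=
  (DirectSum.toModule k A X fun a => c a • (𝒳 a).subtype) ∘ₗ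
    (DirectSum.decomposeLinearEquiv 𝒳).toLinearMap

lemma twist_apply (𝒳 : A → Submodule k X) [DirectSum.Decomposition 𝒳] (c : A → k)
    {a : A} {x : X} (hx : x ∈ 𝒳 a) : twist 𝒳 c x = c a • x := by
  simp [twist, DirectSum.decomposeLinearEquiv_apply, DirectSum.decompose_of_mem 𝒳 hx, ← DirectSum.lof_eq_of k,
    DirectSum.toModule_lof]

/-- The twisted left action of `Λ ⊗ Γ` on `X ⊗ Y`. -/
noncomputable def leftAct (t : A → B → kˣ)
    (𝒳 : A → Submodule k X) [DirectSum.Decomposition 𝒳]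
    (ℬ : B → Submodule k Γ) [DirectSum.Decomposition ℬ] :
    (Λ ⊗[k] Γ) →ₗ[k] Module.End k (X ⊗[k] Y) :=
  TensorProduct.lift <|
    ((LinearMap.llcomp k (X ⊗[k] Y) (X ⊗[k] Y) (X ⊗[k] Y)) ∘ₗ
        (((TensorProduct.mapBilinear (RingHom.id k) X Y X Y).flip LinearMap.id) ∘ₗ lsmulk k Λ X)).compl₂
      ((DirectSum.toModule k B (Module.End k (X ⊗[k] Y)) fun b =>
          (TensorProduct.mapBilinear (RingHom.id k) X Y X Y (twist 𝒳 fun a => (t a b : k))) ∘ₗ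
            (lsmulk k Γ Y) ∘ₗ (ℬ b).subtype) ∘ₗ
        (DirectSum.decomposeLinearEquiv ℬ).toLinearMap)

lemma leftAct_tmul (t : A → B → kˣ)
    (𝒳 : A → Submodule k X) [DirectSum.Decomposition 𝒳]
    (ℬ : B → Submodule k Γ) [DirectSum.Decomposition ℬ]
    (l : Λ) {b : B} {g : Γ} (hg : g ∈ ℬ b) {a : A} {x : X} (hx : x ∈ 𝒳 a) (y : Y) :
    leftAct t 𝒳 ℬ (l ⊗ₜ g) (x ⊗ₜ y) = (t a b : k) • ((l • x) ⊗ₜ (g • y) : X ⊗[k] Y) := by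
  simp [leftAct, DirectSum.decomposeLinearEquiv_apply, DirectSum.decompose_of_mem ℬ hg, ← DirectSum.lof_eq_of k,
    DirectSum.toModule_lof, twist_apply 𝒳 _ hx, smul_tmul', tmul_smul]

/-- The twisted right action of `Λ ⊗ Γ` on `X ⊗ Y` (via `op`). -/
noncomputable def rightAct (t : A → B → kˣ)
    (𝒜 : A → Submodule k Λ) [DirectSum.Decomposition 𝒜]
    (𝒴 : B → Submodule k Y) [DirectSum.Decomposition 𝒴] :
    (Λ ⊗[k] Γ) →ₗ[k] Module.End k (X ⊗[k] Y) :=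
  TensorProduct.lift <|
    LinearMap.flip <|
      (((LinearMap.llcomp k (X ⊗[k] Y) (X ⊗[k] Y) (X ⊗[k] Y)) ∘ₗ
          ((TensorProduct.mapBilinear (RingHom.id k) X Y X Y LinearMap.id) ∘ₗ
            (lsmulk k Γᵐᵒᵖ Y) ∘ₗ (opLinearEquiv k).toLinearMap)).compl₂
        ((DirectSum.toModule k A (Module.End k (X ⊗[k] Y)) fun a =>
            ((TensorProduct.mapBilinear (RingHom.id k) X Y X Y).flip (twist 𝒴 fun b => (t a b : k))) ∘ₗ
              (lsmulk k Λᵐᵒᵖ X) ∘ₗ (opLinearEquiv k).toLinearMap ∘ₗ (𝒜 a).subtype) ∘ₗ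
          (DirectSum.decomposeLinearEquiv 𝒜).toLinearMap))

lemma rightAct_tmul (t : A → B → kˣ)
    (𝒜 : A → Submodule k Λ) [DirectSum.Decomposition 𝒜]
    (𝒴 : B → Submodule k Y) [DirectSum.Decomposition 𝒴]
    {a : A} {l : Λ} (hl : l ∈ 𝒜 a) (g : Γ) (x : X) {b : B} {y : Y} (hy : y ∈ 𝒴 b) :
    rightAct t 𝒜 𝒴 (l ⊗ₜ g) (x ⊗ₜ y)
      = (t a b : k) • (((op l) • x) ⊗ₜ ((op g) • y) : X ⊗[k] Y) := by
  simp [rightAct, DirectSum.decomposeLinearEquiv_apply, DirectSum.decompose_of_mem 𝒜 hl, ← DirectSum.lof_eq_of k,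
    DirectSum.toModule_lof, twist_apply 𝒴 _ hy, smul_tmul', tmul_smul]

end Stmt9Aux
lemma homTensor_ext {k A B Λ Γ T M : Type} [Field k]
    [DecidableEq A] [DecidableEq B]
    [Ring Λ] [Algebra k Λ] [Ring Γ] [Algebra k Γ]
    (𝒜 : A → Submodule k Λ) (ℬ : B → Submodule k Γ)
    [DirectSum.Decomposition 𝒜] [DirectSum.Decomposition ℬ]
    [Ring T] [Algebra k T] (e : (Λ ⊗[k] Γ) ≃ₗ[k] T)
    [AddCommGroup M] [Module k M] (f h : T →ₗ[k] M)
    (H : ∀ (a : A) (b : B) (l : Λ) (g : Γ), l ∈ 𝒜 a → g ∈ ℬ b →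
      f (e (l ⊗ₜ g)) = h (e (l ⊗ₜ g))) : f = h := by
  have hlg : ∀ (l : Λ) (g : Γ), f (e (l ⊗ₜ g)) = h (e (l ⊗ₜ g)) := by
    intro l
    refine DirectSum.Decomposition.inductionOn 𝒜
      (motive := fun l => ∀ g : Γ, f (e (l ⊗ₜ g)) = h (e (l ⊗ₜ g))) ?_ ?_ ?_ l
    · intro g; simp [zero_tmul]
    · rintro a ⟨l, hl⟩ g
      refine DirectSum.Decomposition.inductionOn ℬ
        (motive := fun g => f (e (l ⊗ₜ g)) = h (e (l ⊗ₜ g))) ?_ ?_ ?_ g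
      · simp [tmul_zero]
      · rintro b ⟨g, hg⟩
        exact H a b l g hl hg
      · intro g g' hg hg'
        simp [tmul_add, hg, hg']
    · intro l l' hl hl' g
      simp [add_tmul, hl g, hl' g]
  have key : ∀ z : Λ ⊗[k] Γ, f (e z) = h (e z) := by
    intro z
    induction z using TensorProduct.induction_on with
    | zero => simp
    | tmul l g => exact hlg l g
    | add z z' hz hz' => simp [hz, hz']
  ext u
  simpa using key (e.symm u)

lemma tensor_ext_homog {k A B X Y M : Type} [Field k]
    [DecidableEq A] [DecidableEq B]
    [AddCommGroup X] [Module k X] [AddCommGroup Y] [Module k Y]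
    (𝒳 : A → Submodule k X) [DirectSum.Decomposition 𝒳]
    (𝒴 : B → Submodule k Y) [DirectSum.Decomposition 𝒴]
    [AddCommGroup M] [Module k M] (f h : (X ⊗[k] Y) →ₗ[k] M)
    (H : ∀ (a : A) (b : B) (x : X) (y : Y), x ∈ 𝒳 a → y ∈ 𝒴 b →
      f (x ⊗ₜ y) = h (x ⊗ₜ y)) : f = h := by
  apply TensorProduct.ext'
  intro x
  refine DirectSum.Decomposition.inductionOn 𝒳
    (motive := fun x => ∀ y : Y, f (x ⊗ₜ y) = h (x ⊗ₜ y)) ?_ ?_ ?_ x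
  · intro y; simp [zero_tmul]
  · rintro a ⟨x, hx⟩ y
    refine DirectSum.Decomposition.inductionOn 𝒴
      (motive := fun y => f (x ⊗ₜ y) = h (x ⊗ₜ y)) ?_ ?_ ?_ y
    · simp [tmul_zero]
    · rintro b ⟨y, hy⟩
      exact H a b x y hx hy
    · intro y y' hy hy'
      simp [tmul_add, hy, hy']
  · intro x x' hx hx' y
    simp [add_tmul, hx y, hx' y]



open TensorProduct MulOpposite

/-- Let `X` be a graded `Λ`-bimodule (graded `Λᵉ`-module) and `Y` a graded
`Γ`-bimodule.  Then the rule
`(λ ⊗ γ)(x ⊗ y)(λ' ⊗ γ') = t⟨|x|,|γ|⟩ t⟨|λ'|,|y|⟩ t⟨|λ'|,|γ|⟩ (λxλ') ⊗ (γyγ')`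
defines a graded `(Λ ⊗ᵗ Γ)`-bimodule (i.e. `(Λ ⊗ᵗ Γ)ᵉ`-module) structure on `X ⊗[k] Y`:
there are commuting unital associative left and right `T`-actions satisfying this rule on
homogeneous elements.  (Right actions are encoded via `op`.) -/
theorem stmt9 {k A B Λ Γ T X Y : Type} [Field k]
    [AddCommGroup A] [AddCommGroup B] [DecidableEq A] [DecidableEq B]
    [Ring Λ] [Algebra k Λ] [Ring Γ] [Algebra k Γ]
    (𝒜 : A → Submodule k Λ) (ℬ : B → Submodule k Γ)
    [GradedAlgebra 𝒜] [GradedAlgebra ℬ]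
    (t : A → B → kˣ)
    (ht₁ : ∀ a a' b, t (a + a') b = t a b * t a' b)
    (ht₂ : ∀ a b b', t a (b + b') = t a b * t a b')
    [Ring T] [Algebra k T] (e : (Λ ⊗[k] Γ) ≃ₗ[k] T)
    (he1 : e (1 ⊗ₜ 1) = 1)
    (hemul : ∀ {a b} (x x' : Λ) (y y' : Γ), x' ∈ 𝒜 a → y ∈ ℬ b →
      e (x ⊗ₜ y) * e (x' ⊗ₜ y') = (t a b : k) • e ((x * x') ⊗ₜ (y * y')))
    -- X a graded Λ-bimodule
    [AddCommGroup X] [Module k X] [Module Λ X] [Module Λᵐᵒᵖ X]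
    [IsScalarTower k Λ X] [IsScalarTower k Λᵐᵒᵖ X] [SMulCommClass Λ Λᵐᵒᵖ X]
    (𝒳 : A → Submodule k X) [DirectSum.Decomposition 𝒳]
    (h𝒳l : ∀ {a p} (l : Λ) (x : X), l ∈ 𝒜 a → x ∈ 𝒳 p → l • x ∈ 𝒳 (a + p))
    (h𝒳r : ∀ {a p} (l : Λ) (x : X), l ∈ 𝒜 a → x ∈ 𝒳 p → (op l) • x ∈ 𝒳 (p + a))
    -- Y a graded Γ-bimodule
    [AddCommGroup Y] [Module k Y] [Module Γ Y] [Module Γᵐᵒᵖ Y]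
    [IsScalarTower k Γ Y] [IsScalarTower k Γᵐᵒᵖ Y] [SMulCommClass Γ Γᵐᵒᵖ Y]
    (𝒴 : B → Submodule k Y) [DirectSum.Decomposition 𝒴]
    (h𝒴l : ∀ {b q} (g : Γ) (y : Y), g ∈ ℬ b → y ∈ 𝒴 q → g • y ∈ 𝒴 (b + q))
    (h𝒴r : ∀ {b q} (g : Γ) (y : Y), g ∈ ℬ b → y ∈ 𝒴 q → (op g) • y ∈ 𝒴 (q + b)) :
    ∃ (actL : T →ₗ[k] (X ⊗[k] Y) →ₗ[k] (X ⊗[k] Y))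
      (actR : T →ₗ[k] (X ⊗[k] Y) →ₗ[k] (X ⊗[k] Y)),
      -- left action axioms
      (∀ w, actL 1 w = w) ∧ (∀ u v w, actL (u * v) w = actL u (actL v w)) ∧
      -- right action axioms
      (∀ w, actR 1 w = w) ∧ (∀ u v w, actR (u * v) w = actR v (actR u w)) ∧
      -- the two actions commute (bimodule condition)
      (∀ u v w, actL u (actR v w) = actR v (actL u w)) ∧
      -- the defining rule on homogeneous elements
      (∀ (ax : A) (a' : A) (bg : B) (by' : B) (l l' : Λ) (g g' : Γ) (x : X) (y : Y),
        g ∈ ℬ bg → l' ∈ 𝒜 a' → x ∈ 𝒳 ax → y ∈ 𝒴 by' →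
        actL (e (l ⊗ₜ g)) (actR (e (l' ⊗ₜ g')) (x ⊗ₜ y)) =
          ((t ax bg : k) * (t a' by' : k) * (t a' bg : k)) •
            (((op l') • (l • x)) ⊗ₜ (((op g') • (g • y)) : Y))) := by
  have ht0r : ∀ a, t a 0 = 1 := fun a => by
    have h := ht₂ a 0 0; rw [add_zero] at h; exact (left_eq_mul.mp h)
  have ht0l : ∀ b, t 0 b = 1 := fun b => by
    have h := ht₁ 0 0 b; rw [add_zero] at h; exact (left_eq_mul.mp h)
  have h1 : e.symm 1 = ((1 : Λ) ⊗ₜ (1 : Γ) : Λ ⊗[k] Γ) := by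
    rw [← he1, LinearEquiv.symm_apply_apply]
  refine ⟨(leftAct t 𝒳 ℬ) ∘ₗ e.symm.toLinearMap, (rightAct t 𝒜 𝒴) ∘ₗ e.symm.toLinearMap,
    ?_, ?_, ?_, ?_, ?_, ?_⟩
  · -- left unit
    intro w
    have h2 : leftAct (Y := Y) t 𝒳 ℬ ((1 : Λ) ⊗ₜ (1 : Γ)) = LinearMap.id := by
      apply tensor_ext_homog 𝒳 𝒴
      intro a b x y hx hy
      rw [leftAct_tmul t 𝒳 ℬ (1 : Λ) (SetLike.one_mem_graded ℬ) hx y]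
      simp [ht0r a]
    simp [h1, h2]
  · -- left assoc
    have key : ((LinearMap.mul k T).compr₂ ((leftAct t 𝒳 ℬ) ∘ₗ e.symm.toLinearMap)) =
        ((LinearMap.llcomp k (X ⊗[k] Y) (X ⊗[k] Y) (X ⊗[k] Y) ∘ₗ
            ((leftAct t 𝒳 ℬ) ∘ₗ e.symm.toLinearMap)).compl₂
          ((leftAct t 𝒳 ℬ) ∘ₗ e.symm.toLinearMap)) := by
      refine homTensor_ext (M := T →ₗ[k] Module.End k (X ⊗[k] Y)) 𝒜 ℬ e _ _ fun a b l g hl hg => ?_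
      refine homTensor_ext (M := Module.End k (X ⊗[k] Y)) 𝒜 ℬ e _ _ fun a' b' l' g' hl' hg' => ?_
      apply tensor_ext_homog 𝒳 𝒴
      intro ax q x y hx hy
      simp only [LinearMap.compr₂_apply, LinearMap.mul_apply', LinearMap.compl₂_apply,
        LinearMap.llcomp_apply, LinearMap.comp_apply, LinearEquiv.coe_coe,
        LinearEquiv.symm_apply_apply]
      rw [hemul l l' g g' hl' hg, map_smul, LinearEquiv.symm_apply_apply, map_smul,
        LinearMap.smul_apply,
        leftAct_tmul t 𝒳 ℬ (l * l') (SetLike.mul_mem_graded hg hg') hx y,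
        leftAct_tmul t 𝒳 ℬ l' hg' hx y, map_smul,
        leftAct_tmul t 𝒳 ℬ l hg (h𝒳l l' x hl' hx) (g' • y)]
      rw [ht₂ ax b b', ht₁ a' ax b]
      rw [mul_smul l l' x, mul_smul g g' y]
      simp only [Units.val_mul, smul_smul]
      congr 1
      ring
    exact fun u v w => by
      have h3 := DFunLike.congr_fun (DFunLike.congr_fun (DFunLike.congr_fun key u) v) w
      simpa using h3
  · -- right unit
    intro w
    have h2 : rightAct (X := X) t 𝒜 𝒴 ((1 : Λ) ⊗ₜ (1 : Γ)) = LinearMap.id := by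
      apply tensor_ext_homog 𝒳 𝒴
      intro a b x y hx hy
      rw [rightAct_tmul t 𝒜 𝒴 (SetLike.one_mem_graded 𝒜) (1 : Γ) x hy]
      simp [ht0l b]
    simp [h1, h2]
  · -- right assoc
    have key : ((LinearMap.mul k T).compr₂ ((rightAct t 𝒜 𝒴) ∘ₗ e.symm.toLinearMap)) =
        ((((LinearMap.llcomp k (X ⊗[k] Y) (X ⊗[k] Y) (X ⊗[k] Y)) ∘ₗ
            ((rightAct t 𝒜 𝒴) ∘ₗ e.symm.toLinearMap)).compl₂
          ((rightAct t 𝒜 𝒴) ∘ₗ e.symm.toLinearMap)).flip) := by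
      refine homTensor_ext (M := T →ₗ[k] Module.End k (X ⊗[k] Y)) 𝒜 ℬ e _ _ fun a b l g hl hg => ?_
      refine homTensor_ext (M := Module.End k (X ⊗[k] Y)) 𝒜 ℬ e _ _ fun a' b' l' g' hl' hg' => ?_
      apply tensor_ext_homog 𝒳 𝒴
      intro ax q x y hx hy
      simp only [LinearMap.compr₂_apply, LinearMap.mul_apply', LinearMap.compl₂_apply,
        LinearMap.llcomp_apply, LinearMap.flip_apply, LinearMap.comp_apply, LinearEquiv.coe_coe,
        LinearEquiv.symm_apply_apply]
      rw [hemul l l' g g' hl' hg, map_smul, LinearEquiv.symm_apply_apply, map_smul,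
        LinearMap.smul_apply,
        rightAct_tmul t 𝒜 𝒴 (SetLike.mul_mem_graded hl hl') (g * g') x hy,
        rightAct_tmul t 𝒜 𝒴 hl g x hy, map_smul,
        rightAct_tmul t 𝒜 𝒴 hl' g' (op l • x) (h𝒴r g y hg hy)]
      rw [ht₁ a a' q, ht₂ a' q b, op_mul l l', op_mul g g',
        mul_smul (op l') (op l) x, mul_smul (op g') (op g) y]
      simp only [Units.val_mul, smul_smul]
      congr 1
      ring
    exact fun u v w => by
      have h3 := DFunLike.congr_fun (DFunLike.congr_fun (DFunLike.congr_fun key u) v) w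
      simpa using h3
  · -- commute
    have key : (((LinearMap.llcomp k (X ⊗[k] Y) (X ⊗[k] Y) (X ⊗[k] Y)) ∘ₗ
            ((leftAct t 𝒳 ℬ) ∘ₗ e.symm.toLinearMap)).compl₂
          ((rightAct t 𝒜 𝒴) ∘ₗ e.symm.toLinearMap)) =
        ((((LinearMap.llcomp k (X ⊗[k] Y) (X ⊗[k] Y) (X ⊗[k] Y)) ∘ₗ
            ((rightAct t 𝒜 𝒴) ∘ₗ e.symm.toLinearMap)).compl₂
          ((leftAct t 𝒳 ℬ) ∘ₗ e.symm.toLinearMap)).flip) := by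
      refine homTensor_ext (M := T →ₗ[k] Module.End k (X ⊗[k] Y)) 𝒜 ℬ e _ _ fun a b l g hl hg => ?_
      refine homTensor_ext (M := Module.End k (X ⊗[k] Y)) 𝒜 ℬ e _ _ fun a' b' l' g' hl' hg' => ?_
      apply tensor_ext_homog 𝒳 𝒴
      intro ax q x y hx hy
      simp only [LinearMap.compl₂_apply, LinearMap.llcomp_apply, LinearMap.flip_apply,
        LinearMap.comp_apply, LinearEquiv.coe_coe, LinearEquiv.symm_apply_apply]
      rw [rightAct_tmul t 𝒜 𝒴 hl' g' x hy, map_smul,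
        leftAct_tmul t 𝒳 ℬ l hg (h𝒳r l' x hl' hx) (op g' • y),
        leftAct_tmul t 𝒳 ℬ l hg hx y, map_smul,
        rightAct_tmul t 𝒜 𝒴 hl' g' (l • x) (h𝒴l g y hg hy)]
      rw [ht₁ ax a' b, ht₂ a' b q, smul_comm l (op l') x, smul_comm g (op g') y]
      simp only [Units.val_mul, smul_smul]
      congr 1
      ring
    exact fun u v w => by
      have h3 := DFunLike.congr_fun (DFunLike.congr_fun (DFunLike.congr_fun key u) v) w
      simpa using h3
  · -- defining rule
    intro ax a' bg by' l l' g g' x y hg hl' hx hy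
    simp only [LinearMap.comp_apply, LinearEquiv.coe_coe, LinearEquiv.symm_apply_apply]
    rw [rightAct_tmul t 𝒜 𝒴 hl' g' x hy, map_smul,
      leftAct_tmul t 𝒳 ℬ l hg (h𝒳r l' x hl' hx) (op g' • y),
      ht₁ ax a' bg, smul_comm l (op l') x, smul_comm g (op g') y]
    simp only [Units.val_mul, smul_smul]
    congr 1
    ring
end

section
/- Let q ∈ k^× be an element which is not a root of unity. Then the center of the quantum plane R = k⟨r,s⟩/(sr − q·rs) is k (the scalars), and consequently R is not finitely generated as a module over its center. -/
noncomputable section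

/-- The defining relation `sr = q·rs` of the quantum plane `k⟨r,s⟩/(sr − q·rs)`,
with `r = ι 0` and `s = ι 1`. -/
inductive QPlaneRel (k : Type) [Field k] (q : k) :
    FreeAlgebra k (Fin 2) → FreeAlgebra k (Fin 2) → Prop
  | comm : QPlaneRel k q (FreeAlgebra.ι k 1 * FreeAlgebra.ι k 0)
      (q • (FreeAlgebra.ι k 0 * FreeAlgebra.ι k 1))

/-- The quantum plane `k⟨r,s⟩/(sr − q·rs)`. -/
abbrev QPlane (k : Type) [Field k] (q : k) : Type := RingQuot (QPlaneRel k q)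

namespace QPlaneAux

variable (k : Type) [Field k] (q : k)

/-- The representation space: vector space with basis `e_{m,n}`. -/
abbrev M : Type := (ℕ × ℕ) →₀ k

/-- `r` acts by `e_{m,n} ↦ e_{m+1,n}`. -/
def Rop : M k →ₗ[k] M k := Finsupp.lmapDomain k k (fun p => (p.1 + 1, p.2))

/-- `s` acts by `e_{m,n} ↦ q^m e_{m,n+1}`. -/
def Sop : M k →ₗ[k] M k :=
  Finsupp.lsum k (fun p =>
    LinearMap.toSpanSingleton k (M k) (Finsupp.single (p.1, p.2 + 1) (q ^ p.1)))

@[simp] lemma Rop_single (p : ℕ × ℕ) (a : k) :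
    Rop k (Finsupp.single p a) = Finsupp.single (p.1 + 1, p.2) a := by
  simp [Rop]

@[simp] lemma Sop_single (p : ℕ × ℕ) (a : k) :
    Sop k q (Finsupp.single p a) = Finsupp.single (p.1, p.2 + 1) (a * q ^ p.1) := by
  simp [Sop, LinearMap.toSpanSingleton_apply, Finsupp.smul_single]

/-- The images `r` and `s` of the generators in the quantum plane. -/
def rr : QPlane k q := RingQuot.mkAlgHom k (QPlaneRel k q) (FreeAlgebra.ι k 0)

def ss : QPlane k q := RingQuot.mkAlgHom k (QPlaneRel k q) (FreeAlgebra.ι k 1)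

lemma sr_rel : ss k q * rr k q = q • (rr k q * ss k q) := by
  have := RingQuot.mkAlgHom_rel k (QPlaneRel.comm (k := k) (q := q))
  simpa [rr, ss, map_mul, map_smul] using this

/-- The representation of the quantum plane on `M`. -/
def φ : QPlane k q →ₐ[k] Module.End k (M k) :=
  RingQuot.liftAlgHom k ⟨FreeAlgebra.lift k ![Rop k, Sop k q], by
    rintro a b ⟨⟩
    simp only [map_mul, map_smul, FreeAlgebra.lift_ι_apply, Matrix.cons_val_zero,
      Matrix.cons_val_one, Matrix.head_cons]
    apply Finsupp.lhom_ext
    intro p a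
    simp only [Module.End.mul_apply, LinearMap.smul_apply, Rop_single, Sop_single,
      Finsupp.smul_single]
    congr 1
    rw [smul_eq_mul, pow_succ]
    ring⟩

@[simp] lemma φ_rr : φ k q (rr k q) = Rop k := by
  simp [φ, rr, RingQuot.liftAlgHom_mkAlgHom_apply]

@[simp] lemma φ_ss : φ k q (ss k q) = Sop k q := by
  simp [φ, ss, RingQuot.liftAlgHom_mkAlgHom_apply]

/-- The monomial `r^m s^n`. -/
def mon (m n : ℕ) : QPlane k q := rr k q ^ m * ss k q ^ n

/-- Evaluation at the cyclic vector `e_{0,0}`. -/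
def ev : QPlane k q →ₗ[k] M k where
  toFun z := φ k q z (Finsupp.single (0, 0) 1)
  map_add' x y := by simp
  map_smul' a x := by simp

lemma Sop_pow (n j : ℕ) (a : k) :
    (Sop k q ^ n) (Finsupp.single ((0, j) : ℕ × ℕ) a) = Finsupp.single (0, j + n) a := by
  induction n generalizing j with
  | zero => simp
  | succ n ih =>
    rw [pow_succ, Module.End.mul_apply, Sop_single]
    simpa [show j + (n + 1) = (j + 1) + n by omega] using ih (j + 1)

lemma Rop_pow (m i j : ℕ) (a : k) :
    (Rop k ^ m) (Finsupp.single ((i, j) : ℕ × ℕ) a) = Finsupp.single (i + m, j) a := by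
  induction m generalizing i with
  | zero => simp
  | succ m ih =>
    rw [pow_succ, Module.End.mul_apply, Rop_single]
    simpa [show i + (m + 1) = (i + 1) + m by omega] using ih (i + 1)

@[simp] lemma ev_mon (m n : ℕ) :
    ev k q (mon k q m n) = Finsupp.single (m, n) 1 := by
  simp only [ev, mon, LinearMap.coe_mk, AddHom.coe_mk, map_mul, map_pow, φ_rr, φ_ss,
    Module.End.mul_apply]
  rw [Sop_pow, Rop_pow]
  simp

lemma mon_linearIndependent :
    LinearIndependent k (fun p : ℕ × ℕ => mon k q p.1 p.2) := by
  have h : LinearIndependent k (fun p : ℕ × ℕ => Finsupp.single p (1 : k)) := by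
    have := (Finsupp.basisSingleOne (ι := ℕ × ℕ) (R := k)).linearIndependent
    simpa [Finsupp.coe_basisSingleOne] using this
  apply LinearIndependent.of_comp (ev k q)
  have hcomp : (⇑(ev k q) ∘ fun p : ℕ × ℕ => mon k q p.1 p.2)
      = fun p : ℕ × ℕ => Finsupp.single p (1 : k) := by
    funext p
    simp
  rw [hcomp]
  exact h

lemma s_pow_r (m : ℕ) : ss k q * rr k q ^ m = q ^ m • (rr k q ^ m * ss k q) := by
  induction m with
  | zero => simp
  | succ m ih =>
    rw [pow_succ, ← mul_assoc, ih, smul_mul_assoc, mul_assoc, sr_rel, mul_smul_comm,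
      smul_smul, ← pow_succ, mul_assoc]

lemma s_pow_r_pow (n m : ℕ) :
    ss k q ^ n * rr k q ^ m = q ^ (n * m) • (rr k q ^ m * ss k q ^ n) := by
  induction n with
  | zero => simp
  | succ n ih =>
    rw [pow_succ, mul_assoc, s_pow_r, mul_smul_comm, ← mul_assoc, ih, smul_mul_assoc,
      smul_smul, ← pow_add, mul_assoc, ← pow_succ]
    congr 2
    ring

lemma mon_mul_mon (m n m' n' : ℕ) :
    mon k q m n * mon k q m' n' = q ^ (n * m') • mon k q (m + m') (n + n') := by
  simp only [mon]
  rw [mul_assoc, ← mul_assoc (ss k q ^ n), s_pow_r_pow, smul_mul_assoc, mul_smul_comm,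
    ← mul_assoc, ← mul_assoc, pow_add, pow_add]
  congr 1
  rw [mul_assoc (rr k q ^ m * rr k q ^ m')]

@[simp] lemma mon_r : mon k q 1 0 = rr k q := by simp [mon]

@[simp] lemma mon_s : mon k q 0 1 = ss k q := by simp [mon]

@[simp] lemma mon_one : mon k q 0 0 = 1 := by simp [mon]

lemma adjoin_rs : Algebra.adjoin k {rr k q, ss k q} = ⊤ := by
  have hsurj := RingQuot.mkAlgHom_surjective k (QPlaneRel k q)
  have h1 : Algebra.adjoin k
      ((RingQuot.mkAlgHom k (QPlaneRel k q)) '' Set.range (FreeAlgebra.ι k)) = ⊤ := by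
    rw [← AlgHom.map_adjoin, FreeAlgebra.adjoin_range_ι, Algebra.map_top,
      (AlgHom.range_eq_top _).mpr hsurj]
  rw [eq_top_iff, ← h1]
  apply Algebra.adjoin_mono
  rintro x ⟨y, ⟨i, rfl⟩, rfl⟩
  fin_cases i
  · exact Or.inl rfl
  · exact Or.inr rfl

lemma span_mon_top :
    Submodule.span k (Set.range fun p : ℕ × ℕ => mon k q p.1 p.2) = ⊤ := by
  set T := Submodule.span k (Set.range fun p : ℕ × ℕ => mon k q p.1 p.2) with hT
  have h1 : (1 : QPlane k q) ∈ T := by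
    have h : mon k q 0 0 ∈ T := Submodule.subset_span ⟨(0, 0), rfl⟩
    simpa using h
  have hmul : ∀ x y : QPlane k q, x ∈ T → y ∈ T → x * y ∈ T := by
    intro x y hx hy
    induction hx using Submodule.span_induction generalizing y with
    | mem x hxm =>
      induction hy using Submodule.span_induction with
      | mem y hym =>
        obtain ⟨p, rfl⟩ := hxm
        obtain ⟨p', rfl⟩ := hym
        rw [mon_mul_mon]
        exact T.smul_mem _ (Submodule.subset_span ⟨(p.1 + p'.1, p.2 + p'.2), rfl⟩)
      | zero => simpa using T.zero_mem
      | add y z _ _ hy hz => rw [mul_add]; exact T.add_mem hy hz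
      | smul a y _ hy => rw [mul_smul_comm]; exact T.smul_mem a hy
    | zero => simpa using T.zero_mem
    | add x z _ _ hx hz => rw [add_mul]; exact T.add_mem (hx y hy) (hz y hy)
    | smul a x _ hx => rw [smul_mul_assoc]; exact T.smul_mem a (hx y hy)
  have hA : (T.toSubalgebra h1 hmul : Subalgebra k (QPlane k q)) = ⊤ := by
    rw [eq_top_iff, ← adjoin_rs k q]
    apply Algebra.adjoin_le
    intro x hx
    simp only [Set.mem_insert_iff, Set.mem_singleton_iff] at hx
    rcases hx with rfl | rfl
    · show rr k q ∈ T
      have h : mon k q 1 0 ∈ T := Submodule.subset_span ⟨(1, 0), rfl⟩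
      simpa using h
    · show ss k q ∈ T
      have h : mon k q 0 1 ∈ T := Submodule.subset_span ⟨(0, 1), rfl⟩
      simpa using h
  rw [eq_top_iff]
  intro x _
  exact (hA ▸ Algebra.mem_top : x ∈ T.toSubalgebra h1 hmul)

lemma key_eval (c : (ℕ × ℕ) →₀ k) (f : ℕ × ℕ → ℕ × ℕ) (hf : Function.Injective f)
    (g : ℕ × ℕ → k → k) (hg : ∀ p, g p 0 = 0) (p0 : ℕ × ℕ) :
    (c.sum fun p a => Finsupp.single (f p) (g p a)) (f p0) = g p0 (c p0) := by
  rw [Finsupp.sum_apply]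
  rw [Finsupp.sum_eq_single p0]
  · rw [Finsupp.single_apply, if_pos rfl]
  · intro b _ hb
    rw [Finsupp.single_apply, if_neg (fun h => hb (hf h))]
  · intro _
    rw [hg, Finsupp.single_zero, Finsupp.coe_zero, Pi.zero_apply]

lemma center_eq (hq : ∀ m : ℕ, 0 < m → q ^ m ≠ 1) :
    Subalgebra.center k (QPlane k q) = ⊥ := by
  apply le_antisymm
  · intro z hz
    have hz' : ∀ w : QPlane k q, w * z = z * w := Subalgebra.mem_center_iff.mp hz
    have hmem : z ∈ Submodule.span k (Set.range fun p : ℕ × ℕ => mon k q p.1 p.2) := by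
      rw [span_mon_top]; trivial
    obtain ⟨c, hc⟩ := Finsupp.mem_span_range_iff_exists_finsupp.mp hmem
    -- relation from commuting with s
    have hs : ∀ p0 : ℕ × ℕ, c p0 * q ^ p0.1 = c p0 := by
      intro p0
      have h1 : ss k q * z = c.sum fun p a => (a * q ^ p.1) • mon k q p.1 (p.2 + 1) := by
        rw [← hc, Finsupp.mul_sum]
        apply Finsupp.sum_congr
        intro p _
        rw [mul_smul_comm, ← mon_s k q, mon_mul_mon, smul_smul]
        simp [add_comm 1 p.2]
      have h2 : z * ss k q = c.sum fun p a => a • mon k q p.1 (p.2 + 1) := by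
        rw [← hc, Finsupp.sum_mul]
        apply Finsupp.sum_congr
        intro p _
        rw [smul_mul_assoc, ← mon_s k q, mon_mul_mon]
        simp
      have heq : (c.sum fun p a => (a * q ^ p.1) • mon k q p.1 (p.2 + 1))
          = c.sum fun p a => a • mon k q p.1 (p.2 + 1) := by
        rw [← h1, ← h2, hz']
      have heq2 := congrArg (ev k q) heq
      rw [map_finsuppSum, map_finsuppSum] at heq2
      simp only [map_smul, ev_mon, Finsupp.smul_single, smul_eq_mul, mul_one] at heq2
      have hinj : Function.Injective (fun p : ℕ × ℕ => ((p.1, p.2 + 1) : ℕ × ℕ)) := by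
        intro p p' h
        simp only [Prod.mk.injEq] at h
        exact Prod.ext h.1 (by omega)
      have hL := key_eval k c _ hinj (fun p a => a * q ^ p.1) (fun p => by ring) p0
      have hR := key_eval k c _ hinj (fun p a => a) (fun p => rfl) p0
      rw [heq2] at hL
      exact hL.symm.trans hR
    -- relation from commuting with r
    have hr : ∀ p0 : ℕ × ℕ, c p0 * q ^ p0.2 = c p0 := by
      intro p0
      have h1 : z * rr k q = c.sum fun p a => (a * q ^ p.2) • mon k q (p.1 + 1) p.2 := by
        rw [← hc, Finsupp.sum_mul]
        apply Finsupp.sum_congr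
        intro p _
        rw [smul_mul_assoc, ← mon_r k q, mon_mul_mon, smul_smul]
        simp
      have h2 : rr k q * z = c.sum fun p a => a • mon k q (p.1 + 1) p.2 := by
        rw [← hc, Finsupp.mul_sum]
        apply Finsupp.sum_congr
        intro p _
        rw [mul_smul_comm, ← mon_r k q, mon_mul_mon]
        simp [add_comm 1 p.1]
      have heq : (c.sum fun p a => (a * q ^ p.2) • mon k q (p.1 + 1) p.2)
          = c.sum fun p a => a • mon k q (p.1 + 1) p.2 := by
        rw [← h1, ← h2, hz']
      have heq2 := congrArg (ev k q) heq
      rw [map_finsuppSum, map_finsuppSum] at heq2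
      simp only [map_smul, ev_mon, Finsupp.smul_single, smul_eq_mul, mul_one] at heq2
      have hinj : Function.Injective (fun p : ℕ × ℕ => ((p.1 + 1, p.2) : ℕ × ℕ)) := by
        intro p p' h
        simp only [Prod.mk.injEq] at h
        exact Prod.ext (by omega) h.2
      have hL := key_eval k c _ hinj (fun p a => a * q ^ p.2) (fun p => by ring) p0
      have hR := key_eval k c _ hinj (fun p a => a) (fun p => rfl) p0
      rw [heq2] at hL
      exact hL.symm.trans hR
    have hzero : ∀ p : ℕ × ℕ, p ≠ (0, 0) → c p = 0 := by
      intro p hp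
      by_contra hcp
      rcases Nat.eq_zero_or_pos p.1 with h1 | h1
      · rcases Nat.eq_zero_or_pos p.2 with h2 | h2
        · exact hp (Prod.ext h1 h2)
        · have hq1 : q ^ p.2 = 1 := by
            have h' : c p * q ^ p.2 = c p * 1 := by rw [mul_one]; exact hr p
            exact mul_left_cancel₀ hcp h'
          exact hq p.2 h2 hq1
      · have hq1 : q ^ p.1 = 1 := by
          have h' : c p * q ^ p.1 = c p * 1 := by rw [mul_one]; exact hs p
          exact mul_left_cancel₀ hcp h'
        exact hq p.1 h1 hq1
    have hcs : c = Finsupp.single (0, 0) (c (0, 0)) := by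
      ext p
      by_cases hp : p = (0, 0)
      · subst hp; simp
      · rw [hzero p hp, Finsupp.single_apply, if_neg (fun h => hp h.symm)]
    rw [← hc, hcs, Finsupp.sum_single_index (by simp)]
    rw [Algebra.mem_bot]
    refine ⟨c (0, 0), ?_⟩
    simp [Algebra.algebraMap_eq_smul_one]
  · intro x hx
    rw [Algebra.mem_bot] at hx
    obtain ⟨a, rfl⟩ := hx
    rw [Subalgebra.mem_center_iff]
    intro b
    exact (Algebra.commutes a b).symm

end QPlaneAux

/-- Let `q ∈ kˣ` not be a root of unity.  Then the center of the
quantum plane `R = k⟨r,s⟩/(sr − q·rs)` is `k` (the scalars), and consequently `R` is not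
finitely generated as a module over its center. -/
theorem stmt17 (k : Type) [Field k] (q : k) (hq0 : q ≠ 0)
    (hq : ∀ m : ℕ, 0 < m → q ^ m ≠ 1) :
    Subalgebra.center k (QPlane k q) = ⊥ ∧
    ¬ Module.Finite (Subalgebra.center k (QPlane k q)) (QPlane k q) := by
  have hcen := QPlaneAux.center_eq k q hq
  refine ⟨hcen, ?_⟩
  intro hfin
  obtain ⟨S, hS⟩ := hfin.fg_top
  have hle : ∀ x : QPlane k q,
      x ∈ Submodule.span (Subalgebra.center k (QPlane k q)) (S : Set (QPlane k q)) →
      x ∈ Submodule.span k (S : Set (QPlane k q)) := by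
    intro x hx
    induction hx using Submodule.span_induction with
    | mem y hy => exact Submodule.subset_span hy
    | zero => exact Submodule.zero_mem _
    | add y z _ _ hy hz => exact Submodule.add_mem _ hy hz
    | smul a y _ hy =>
      obtain ⟨a, ha⟩ := a
      rw [hcen, Algebra.mem_bot] at ha
      obtain ⟨b, rfl⟩ := ha
      have hsm : (⟨algebraMap k (QPlane k q) b,
          hcen ▸ (Algebra.mem_bot.mpr ⟨b, rfl⟩)⟩ : Subalgebra.center k (QPlane k q)) • y
          = b • y := by
        rw [Subalgebra.smul_def, smul_eq_mul, ← Algebra.smul_def]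
      rw [hsm]
      exact Submodule.smul_mem _ b hy
  have hspan : Submodule.span k (S : Set (QPlane k q)) = ⊤ := by
    rw [eq_top_iff]
    intro x _
    exact hle x (hS ▸ Submodule.mem_top)
  have hfk : Module.Finite k (QPlane k q) := ⟨⟨S, hspan⟩⟩
  have hfin2 : Finite (ℕ × ℕ) := (QPlaneAux.mon_linearIndependent k q).finite
  exact not_finite (ℕ × ℕ)
end
end
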